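/- arXiv:1211.1867 — 5 statements merged into one kernel-verified Lean document; each statement's English description precedes it below -/
import Mathlib

section
/- Let δ be an admissible order function on A_n(K). Then the map Λ_δ: ℕ^{2n} → ℤ defined by Λ_δ(α,β) = δ(x^α D^β) is the restriction to ℕ^{2n} of a unique linear form on ℚ^{2n} with integer coefficients (p_1,...,p_n,q_1,...,q_n) satisfying p_i + q_i ≥ 0 for all 1 ≤ i ≤ n. -/
/-- The index set of normal monomials `x^α D^β` of the Weyl algebra `A_n(K)`. -/
abbrev WMon (n : ℕ) := (Fin n → ℕ) × (Fin n → ℕ)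

/-- The normal monomial `x^α D^β`. -/
def wmono {A : Type*} [Ring A] {n : ℕ} (x D : Fin n → A) (ab : WMon n) : A :=
  (List.ofFn fun i => x i ^ ab.1 i).prod * (List.ofFn fun i => D i ^ ab.2 i).prod

/-- A presentation of the Weyl algebra `A_n(K)`: an associative `K`-algebra `A` with
generators `x_i, D_i` satisfying `[x_i,x_j] = [D_i,D_j] = 0`, `[D_i,x_j] = δ_{ij}`,
such that the normal monomials `x^α D^β` form a `K`-basis. -/
structure WeylData (K : Type*) [Field K] (n : ℕ) (A : Type*) [Ring A] [Algebra K A] where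
  x : Fin n → A
  D : Fin n → A
  hxx : ∀ i j, x i * x j = x j * x i
  hDD : ∀ i j, D i * D j = D j * D i
  hDx : ∀ i j, D i * x j = x j * D i + (if i = j then 1 else 0)
  basis : Module.Basis (WMon n) K A
  basis_eq : ∀ ab, basis ab = wmono x D ab

/-- The Newton diagram of an operator. -/
noncomputable def ND {K : Type*} [Field K] {n : ℕ} {A : Type*} [Ring A] [Algebra K A]
    (W : WeylData K n A) (P : A) : Finset (WMon n) := (W.basis.repr P).support

/-- An order function on the Weyl algebra, with values in `ℤ ∪ {-∞} = WithBot ℤ`. -/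
structure IsOrderFunction (K : Type*) [Field K] {A : Type*} [Ring A] [Algebra K A]
    (δ : A → WithBot ℤ) : Prop where
  scalar : ∀ c : K, c ≠ 0 → δ (algebraMap K A c) = 0
  bot_iff : ∀ P : A, δ P = ⊥ ↔ P = 0
  add_le : ∀ P Q : A, δ (P + Q) ≤ max (δ P) (δ Q)
  mul : ∀ P Q : A, δ (P * Q) = δ P + δ Q

/-- An admissible order function: an order function such that `δ(P)` is the maximum of
`δ(x^α D^β)` over the Newton diagram of `P`. -/
def IsAdmissible {K : Type*} [Field K] {n : ℕ} {A : Type*} [Ring A] [Algebra K A]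
    (W : WeylData K n A) (δ : A → WithBot ℤ) : Prop :=
  IsOrderFunction K δ ∧
    ∀ P : A, P ≠ 0 → δ P = (ND W P).sup fun ab => δ (wmono W.x W.D ab)

/-- A well monomial ordering: an irreflexive, transitive, total relation, compatible with
addition, which is a well-ordering. -/
def WellMonomialOrdering {σ : Type*} [AddCommMonoid σ] (r : σ → σ → Prop) : Prop :=
  (∀ a, ¬ r a a) ∧ (∀ a b c, r a b → r b c → r a c) ∧
    (∀ a b, a ≠ b → r a b ∨ r b a) ∧
    (∀ a b c, r a b → r (a + c) (b + c)) ∧ WellFounded r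

/-- The monomial ordering `≺_δ` refining the admissible order function `δ` by a fixed
monomial ordering `r`. -/
def rdelta {K : Type*} [Field K] {n : ℕ} {A : Type*} [Ring A] [Algebra K A]
    (W : WeylData K n A) (δ : A → WithBot ℤ) (r : WMon n → WMon n → Prop) :
    WMon n → WMon n → Prop := fun a b =>
  δ (wmono W.x W.D a) < δ (wmono W.x W.D b) ∨
    (δ (wmono W.x W.D a) = δ (wmono W.x W.D b) ∧ r a b)

/-- `e` is the maximal element (exponent) of the Newton diagram of `P` w.r.t. `rd`. -/
def IsExp {K : Type*} [Field K] {n : ℕ} {A : Type*} [Ring A] [Algebra K A]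
    (W : WeylData K n A) (rd : WMon n → WMon n → Prop) (P : A) (e : WMon n) : Prop :=
  e ∈ ND W P ∧ ∀ f ∈ ND W P, f ≠ e → rd f e

/-- Index set of monomials `t^k x^α D^β` of the homogenised Weyl algebra. -/
abbrev HMon (n : ℕ) := ℕ × WMon n

/-- A presentation of the homogenised Weyl algebra `A_n[t]`: generators `t, x_i, D_i` with
`t` commuting with the `x_i, D_i`, `[x_i,x_j] = [D_i,D_j] = 0`, `[D_i,x_j] = δ_{ij} t²`,
and the monomials `t^k x^α D^β` forming a `K`-basis. -/
structure HWeylData (K : Type*) [Field K] (n : ℕ) (B : Type*) [Ring B] [Algebra K B] where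
  t : B
  x : Fin n → B
  D : Fin n → B
  htx : ∀ i, t * x i = x i * t
  htD : ∀ i, t * D i = D i * t
  hxx : ∀ i j, x i * x j = x j * x i
  hDD : ∀ i j, D i * D j = D j * D i
  hDx : ∀ i j, D i * x j = x j * D i + (if i = j then t ^ 2 else 0)
  basis : Module.Basis (HMon n) K B
  basis_eq : ∀ v, basis v = t ^ v.1 * wmono x D v.2

/-- Total degree `|α| + |β|` of a monomial of the Weyl algebra. -/
def wdeg {n : ℕ} (ab : WMon n) : ℕ := (∑ i, ab.1 i) + (∑ i, ab.2 i)

/-- The total order `ord^T(P)` of an operator `P`. -/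
noncomputable def ordT {K : Type*} [Field K] {n : ℕ} {A : Type*} [Ring A] [Algebra K A]
    (W : WeylData K n A) (P : A) : ℕ := (ND W P).sup wdeg

/-- The Newton diagram of an element of the homogenised Weyl algebra. -/
noncomputable def NDH {K : Type*} [Field K] {n : ℕ} {B : Type*} [Ring B] [Algebra K B]
    (V : HWeylData K n B) (H : B) : Finset (HMon n) := (V.basis.repr H).support

/-- The homogenisation `h(P) = Σ p_{αβ} t^{ord^T(P)-|α|-|β|} x^α D^β` of an operator. -/
noncomputable def homog {K : Type*} [Field K] {n : ℕ} {A B : Type*} [Ring A] [Algebra K A]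
    [Ring B] [Algebra K B] (W : WeylData K n A) (V : HWeylData K n B) (P : A) : B :=
  ∑ ab ∈ ND W P,
    W.basis.repr P ab • (V.t ^ (ordT W P - wdeg ab) * wmono V.x V.D ab)

/-- The dehomogenisation `H|_{t=1}` of an element of the homogenised Weyl algebra. -/
noncomputable def dehom {K : Type*} [Field K] {n : ℕ} {A B : Type*} [Ring A] [Algebra K A]
    [Ring B] [Algebra K B] (W : WeylData K n A) (V : HWeylData K n B) (H : B) : A :=
  ∑ v ∈ NDH V H, V.basis.repr H v • wmono W.x W.D v.2

/-- `H` is homogeneous of degree `d` in `A_n[t]` (degree of `t^k x^α D^β` is `k+|α|+|β|`). -/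
def IsHomogOfDeg {K : Type*} [Field K] {n : ℕ} {B : Type*} [Ring B] [Algebra K B]
    (V : HWeylData K n B) (H : B) (d : ℕ) : Prop :=
  ∀ v ∈ NDH V H, v.1 + wdeg v.2 = d

/-- Total degree of a monomial of `A_n[t]`. -/
def hdeg {n : ℕ} (v : HMon n) : ℕ := v.1 + wdeg v.2

/-- The well monomial ordering `⊲` on `ℕ^{2n+1}`: compare first by total degree
`k + |α| + |β|`, then by `≺_δ` on `(α,β)`. -/
def rT {K : Type*} [Field K] {n : ℕ} {A : Type*} [Ring A] [Algebra K A]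
    (W : WeylData K n A) (δ : A → WithBot ℤ) (r : WMon n → WMon n → Prop) :
    HMon n → HMon n → Prop := fun a b =>
  hdeg a < hdeg b ∨ (hdeg a = hdeg b ∧ rdelta W δ r a.2 b.2)

/-- `E` is the maximal element of the Newton diagram of `H ∈ A_n[t]` w.r.t. `rd`. -/
def IsExpH {K : Type*} [Field K] {n : ℕ} {B : Type*} [Ring B] [Algebra K B]
    (V : HWeylData K n B) (rd : HMon n → HMon n → Prop) (H : B) (E : HMon n) : Prop :=
  E ∈ NDH V H ∧ ∀ F ∈ NDH V H, F ≠ E → rd F E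

/-- The translated cone `e + ℕ^{2n+1}`. -/
def expCone {n : ℕ} (e : HMon n) : Set (HMon n) := {v | ∃ γ, v = e + γ}

/-- the map `Λ_δ(α,β) = δ(x^α D^β)` associated to an admissible order
function is the restriction to `ℕ^{2n}` of a unique linear form on `ℚ^{2n}` with integer
coefficients `(p₁,…,pₙ,q₁,…,qₙ)` satisfying `pᵢ + qᵢ ≥ 0`. -/
theorem admissible_linear_form (K : Type*) [Field K] (n : ℕ) (A : Type*) [Ring A]
    [Algebra K A] (W : WeylData K n A) (δ : A → WithBot ℤ) (hδ : IsAdmissible W δ) :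
    ∃! pq : (Fin n → ℤ) × (Fin n → ℤ),
      (∀ i, 0 ≤ pq.1 i + pq.2 i) ∧
      ∀ ab : WMon n, δ (wmono W.x W.D ab) =
        (((∑ i, pq.1 i * (ab.1 i : ℤ)) + ∑ i, pq.2 i * (ab.2 i : ℤ) : ℤ) : WithBot ℤ) := by
  obtain ⟨hof, _⟩ := hδ
  have hA : Nontrivial A := ⟨W.basis (0, 0), 0, W.basis.ne_zero _⟩
  have hone : δ 1 = 0 := by
    have := hof.scalar 1 one_ne_zero
    simpa using this
  have hneg : ∀ P : A, δ (-P) = δ P := by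
    intro P
    have h : (-P) = algebraMap K A (-1) * P := by simp
    rw [h, hof.mul, hof.scalar (-1) (by norm_num), zero_add]
  have hx : ∀ i, W.x i ≠ 0 := by
    intro i hx0
    have h := W.hDx i i
    rw [hx0] at h
    simp at h
  have hD : ∀ i, W.D i ≠ 0 := by
    intro i hD0
    have h := W.hDx i i
    rw [hD0] at h
    simp at h
  choose p hp using fun i => WithBot.ne_bot_iff_exists.mp
    (fun hb => hx i ((hof.bot_iff _).mp hb))
  choose q hq using fun i => WithBot.ne_bot_iff_exists.mp
    (fun hb => hD i ((hof.bot_iff _).mp hb))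
  -- δ of powers
  have hpow : ∀ (a : A) (z : ℤ), δ a = (z : WithBot ℤ) → ∀ k : ℕ,
      δ (a ^ k) = ((k * z : ℤ) : WithBot ℤ) := by
    intro a z hz k
    induction k with
    | zero => simpa using hone
    | succ k ih =>
      rw [pow_succ, hof.mul, ih, hz]
      rw [← WithBot.coe_add]
      congr 1
      push_cast
      ring
  -- δ of a list product
  have hlist : ∀ (m : ℕ) (f : Fin m → A) (g : Fin m → ℤ),
      (∀ i, δ (f i) = (g i : WithBot ℤ)) →
      δ (List.ofFn f).prod = ((∑ i, g i : ℤ) : WithBot ℤ) := by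
    intro m
    induction m with
    | zero => intro f g h; simpa using hone
    | succ m ih =>
      intro f g h
      rw [List.ofFn_succ, List.prod_cons, hof.mul, h 0,
        ih (fun i => f i.succ) (fun i => g i.succ) (fun i => h i.succ),
        Fin.sum_univ_succ, WithBot.coe_add]
  have hmono : ∀ ab : WMon n, δ (wmono W.x W.D ab) =
      (((∑ i, p i * (ab.1 i : ℤ)) + ∑ i, q i * (ab.2 i : ℤ) : ℤ) : WithBot ℤ) := by
    intro ab
    rw [wmono, hof.mul,
      hlist n (fun i => W.x i ^ ab.1 i) (fun i => p i * ab.1 i)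
        (fun i => by rw [hpow (W.x i) (p i) (hp i).symm (ab.1 i)]; norm_cast; ring),
      hlist n (fun i => W.D i ^ ab.2 i) (fun i => q i * ab.2 i)
        (fun i => by rw [hpow (W.D i) (q i) (hq i).symm (ab.2 i)]; norm_cast; ring),
      WithBot.coe_add]
  have hpq : ∀ i, 0 ≤ p i + q i := by
    intro i
    have e1 : (1 : A) = W.D i * W.x i + (-(W.x i * W.D i)) := by
      rw [W.hDx i i]; simp
    have h0 : (0 : WithBot ℤ) ≤ ((p i + q i : ℤ) : WithBot ℤ) := by
      calc (0 : WithBot ℤ) = δ 1 := hone.symm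
        _ ≤ max (δ (W.D i * W.x i)) (δ (-(W.x i * W.D i))) := by
            rw [e1]; exact hof.add_le _ _
        _ = ((p i + q i : ℤ) : WithBot ℤ) := by
            rw [hneg, hof.mul, hof.mul, ← hp i, ← hq i, ← WithBot.coe_add,
              ← WithBot.coe_add, Int.add_comm (q i) (p i), max_self]
    exact_mod_cast h0
  refine ⟨(p, q), ⟨hpq, hmono⟩, ?_⟩
  rintro ⟨p', q'⟩ ⟨-, h2⟩
  have key : ∀ i, p' i = p i ∧ q' i = q i := by
    intro i
    constructor
    · have e1 := (h2 (Pi.single i 1, 0)).symm.trans (hmono (Pi.single i 1, 0))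
      have e2 := WithBot.coe_injective e1
      simpa [Pi.single_apply, Finset.sum_ite_eq', mul_comm] using e2
    · have e1 := (h2 (0, Pi.single i 1)).symm.trans (hmono (0, Pi.single i 1))
      have e2 := WithBot.coe_injective e1
      simpa [Pi.single_apply, Finset.sum_ite_eq', mul_comm] using e2
  exact Prod.ext (funext fun i => (key i).1) (funext fun i => (key i).2)
end

section
/- Let Λ: ℚ^{2n} → ℚ be a linear form with integer coefficients (p_1,...,p_n,q_1,...,q_n) satisfying p_i + q_i ≥ 0 for all i. Then there exists a unique admissible order function δ_Λ: A_n(K) → ℤ ∪ {-∞} such that δ_Λ(x^α D^β) = Λ(α,β) for all (α,β) ∈ ℕ^{2n}; it is given by δ_Λ(0) = -∞ and δ_Λ(P) = max{Λ(α,β) : (α,β) ∈ N(P)} for nonzero P. -/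
section ListAux
variable {M : Type*} [Monoid M]

lemma list_ofFn_pull : ∀ {m : ℕ} (f : Fin m → M), (∀ j k, Commute (f j) (f k)) →
    ∀ (i : Fin m), (List.ofFn f).prod = f i * (List.ofFn (Function.update f i 1)).prod := by
  intro m
  induction m with
  | zero => intro f h i; exact i.elim0
  | succ m ih =>
    intro f h i
    rw [List.ofFn_succ, List.ofFn_succ]
    induction i using Fin.cases with
    | zero =>
      have h1 : (fun j : Fin m => Function.update f 0 1 j.succ) = fun j => f j.succ := by
        funext j; simp [Function.update_apply, Fin.succ_ne_zero]
      simp [h1]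
    | succ i' =>
      have hcomp : (fun j => Function.update f i'.succ 1 j.succ)
          = Function.update (fun j : Fin m => f j.succ) i' 1 := by
        funext j
        simp [Function.update_apply, Fin.succ_inj]
      simp only [List.prod_cons]
      rw [ih (fun j => f j.succ) (fun j k => h _ _) i']
      rw [hcomp]
      have h0 : Function.update f i'.succ 1 0 = f 0 := by
        simp [Function.update_apply, (Fin.succ_ne_zero i').symm]
      rw [h0, ← mul_assoc, ← mul_assoc, (h 0 i'.succ).eq]

lemma list_ofFn_mul : ∀ {m : ℕ} (f g : Fin m → M), (∀ j k, Commute (g j) (f k)) →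
    (List.ofFn fun j => f j * g j).prod = (List.ofFn f).prod * (List.ofFn g).prod := by
  intro m
  induction m with
  | zero => simp
  | succ m ih =>
    intro f g h
    rw [List.ofFn_succ, List.ofFn_succ, List.ofFn_succ]
    simp only [List.prod_cons]
    rw [ih (fun j => f j.succ) (fun j => g j.succ) (fun j k => h _ _)]
    have hc : Commute (g 0) (List.ofFn fun j : Fin m => f j.succ).prod := by
      apply Commute.list_prod_right
      intro b hb
      rw [List.mem_ofFn] at hb
      obtain ⟨j, rfl⟩ := hb
      exact h _ _
    simp only [mul_assoc]
    congr 1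
    rw [← mul_assoc, hc.eq, mul_assoc]

end ListAux

namespace WeylAux
variable {K : Type*} [Field K] {n : ℕ} {A : Type*} [Ring A] [Algebra K A] (W : WeylData K n A)

/-- `x^α`. -/
def xpow (α : Fin n → ℕ) : A := (List.ofFn fun i => W.x i ^ α i).prod
/-- `D^β`. -/
def Dpow (β : Fin n → ℕ) : A := (List.ofFn fun i => W.D i ^ β i).prod

lemma wmono_eq (ab : WMon n) : wmono W.x W.D ab = xpow W ab.1 * Dpow W ab.2 := rfl

lemma commute_xx (i j : Fin n) : Commute (W.x i) (W.x j) := W.hxx i j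
lemma commute_DD (i j : Fin n) : Commute (W.D i) (W.D j) := W.hDD i j
lemma commute_Dx (i j : Fin n) (h : i ≠ j) : Commute (W.D i) (W.x j) := by
  have := W.hDx i j
  rw [if_neg h, add_zero] at this
  exact this

lemma xpow_zero : xpow W 0 = 1 := by
  apply List.prod_eq_one
  intro a ha
  rw [List.mem_ofFn] at ha
  obtain ⟨j, rfl⟩ := ha
  simp

lemma Dpow_zero : Dpow W 0 = 1 := by
  apply List.prod_eq_one
  intro a ha
  rw [List.mem_ofFn] at ha
  obtain ⟨j, rfl⟩ := ha
  simp

lemma xpow_add (α α' : Fin n → ℕ) : xpow W (α + α') = xpow W α * xpow W α' := by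
  unfold xpow
  have h : (fun i => W.x i ^ (α + α') i) = fun i => W.x i ^ α i * W.x i ^ α' i := by
    funext i; rw [Pi.add_apply, pow_add]
  rw [h]
  exact list_ofFn_mul _ _ fun j k => ((commute_xx W j k).pow_pow _ _)

lemma Dpow_add (β β' : Fin n → ℕ) : Dpow W (β + β') = Dpow W β * Dpow W β' := by
  unfold Dpow
  have h : (fun i => W.D i ^ (β + β') i) = fun i => W.D i ^ β i * W.D i ^ β' i := by
    funext i; rw [Pi.add_apply, pow_add]
  rw [h]
  exact list_ofFn_mul _ _ fun j k => ((commute_DD W j k).pow_pow _ _)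

lemma xpow_pull (α : Fin n → ℕ) (i : Fin n) :
    xpow W α = W.x i ^ α i * xpow W (Function.update α i 0) := by
  unfold xpow
  rw [list_ofFn_pull (fun j => W.x j ^ α j) (fun j k => (commute_xx W j k).pow_pow _ _) i]
  have h2 : Function.update (fun j => W.x j ^ α j) i 1
      = fun j => W.x j ^ (Function.update α i 0 j) := by
    funext j
    by_cases h : j = i
    · subst h; simp
    · simp [Function.update_apply, h]
  rw [h2]

lemma Dpow_pull (β : Fin n → ℕ) (i : Fin n) :
    Dpow W β = W.D i ^ β i * Dpow W (Function.update β i 0) := by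
  unfold Dpow
  rw [list_ofFn_pull (fun j => W.D j ^ β j) (fun j k => (commute_DD W j k).pow_pow _ _) i]
  have h2 : Function.update (fun j => W.D j ^ β j) i 1
      = fun j => W.D j ^ (Function.update β i 0 j) := by
    funext j
    by_cases h : j = i
    · subst h; simp
    · simp [Function.update_apply, h]
  rw [h2]

lemma Dpow_single (i : Fin n) : Dpow W (Pi.single i 1) = W.D i := by
  rw [Dpow_pull W _ i]
  have h1 : Function.update (Pi.single i 1 : Fin n → ℕ) i 0 = 0 := by
    funext j
    by_cases h : j = i
    · subst h; simp
    · simp [Function.update_apply, h, Pi.single_apply]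
  rw [h1, Dpow_zero, mul_one]
  simp

lemma D_mul_Dpow (i : Fin n) (β : Fin n → ℕ) :
    W.D i * Dpow W β = Dpow W (β + Pi.single i 1) := by
  rw [add_comm, Dpow_add, Dpow_single]

lemma commute_D_xpow_of (i : Fin n) (α : Fin n → ℕ) (h : α i = 0) :
    Commute (W.D i) (xpow W α) := by
  apply Commute.list_prod_right
  intro b hb
  rw [List.mem_ofFn] at hb
  obtain ⟨j, rfl⟩ := hb
  show Commute (W.D i) (W.x j ^ α j)
  by_cases hj : i = j
  · subst hj; rw [h, pow_zero]; exact Commute.one_right _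
  · exact (commute_Dx W i j hj).pow_right _

lemma D_x_pow_succ (i : Fin n) (k : ℕ) :
    W.D i * W.x i ^ (k + 1) = W.x i ^ (k + 1) * W.D i + (k + 1) • W.x i ^ k := by
  induction k with
  | zero =>
    have := W.hDx i i
    rw [if_pos rfl] at this
    simpa using this
  | succ k ih =>
    have hDx := W.hDx i i
    rw [if_pos rfl] at hDx
    calc W.D i * W.x i ^ (k + 2) = (W.D i * W.x i ^ (k+1)) * W.x i := by
          rw [mul_assoc, ← pow_succ]
      _ = W.x i ^ (k+1) * (W.D i * W.x i) + (k+1) • (W.x i ^ k * W.x i) := by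
          rw [ih, add_mul, mul_assoc, smul_mul_assoc]
      _ = W.x i ^ (k+1) * (W.x i * W.D i) + (W.x i ^ (k+1) + (k+1) • W.x i ^ (k+1)) := by
          rw [hDx, mul_add, mul_one, ← pow_succ, add_assoc]
      _ = W.x i ^ (k + 2) * W.D i + (k + 2) • W.x i ^ (k+1) := by
          rw [← mul_assoc, ← pow_succ, succ_nsmul' (W.x i ^ (k+1)) (k+1)]

lemma D_mul_xpow (i : Fin n) (α : Fin n → ℕ) :
    W.D i * xpow W α = xpow W α * W.D i + (α i) • xpow W (α - Pi.single i 1) := by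
  rcases h : α i with _ | k
  · rw [zero_smul, add_zero]
    exact (commute_D_xpow_of W i α h).eq
  · have hpull := xpow_pull W α i
    rw [h] at hpull
    have hcomm := commute_D_xpow_of W i (Function.update α i 0) (by simp)
    have hsub : α - Pi.single i 1 = Function.update α i k := by
      funext j
      by_cases hj : j = i
      · subst hj; simp [h]
      · simp [Function.update_apply, hj, Pi.single_apply]
    have hsubpull : xpow W (α - Pi.single i 1) = W.x i ^ k * xpow W (Function.update α i 0) := by
      rw [hsub, xpow_pull W _ i]
      congr 2
      · simp
      · funext j
        by_cases hj : j = i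
        · subst hj; simp
        · simp [Function.update_apply, hj]
    rw [hpull, ← mul_assoc, D_x_pow_succ W i k, add_mul, mul_assoc, hcomm.eq,
      ← mul_assoc, smul_mul_assoc, ← hsubpull]

lemma D_mul_wmono (i : Fin n) (c : WMon n) :
    W.D i * wmono W.x W.D c = wmono W.x W.D (c.1, c.2 + Pi.single i 1)
      + (c.1 i) • wmono W.x W.D (c.1 - Pi.single i 1, c.2) := by
  rw [wmono_eq, wmono_eq, wmono_eq, ← mul_assoc, D_mul_xpow, add_mul, mul_assoc,
    D_mul_Dpow, smul_mul_assoc]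

lemma xpow_mul_wmono (α : Fin n → ℕ) (c : WMon n) :
    xpow W α * wmono W.x W.D c = wmono W.x W.D ((α, 0) + c) := by
  have h1 : (α, (0 : Fin n → ℕ)) + c = (α + c.1, c.2) := by
    ext j <;> simp
  rw [h1, wmono_eq, wmono_eq, ← mul_assoc, ← xpow_add]

lemma wmono_mul_Dpow (β : Fin n → ℕ) (c : WMon n) :
    wmono W.x W.D c * Dpow W β = wmono W.x W.D (c + (0, β)) := by
  have h1 : c + ((0 : Fin n → ℕ), β) = (c.1, c.2 + β) := by
    ext j <;> simp
  rw [h1, wmono_eq, wmono_eq, mul_assoc, ← Dpow_add]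

end WeylAux
namespace WeylAux
variable {K : Type*} [Field K] {n : ℕ} {A : Type*} [Ring A] [Algebra K A] (W : WeylData K n A)

variable (n) in
/-- The linear form `Λ(α,β) = Σ pᵢαᵢ + Σ qᵢβᵢ`. -/
def Lam (p q : Fin n → ℤ) (ab : WMon n) : ℤ :=
  (∑ i, p i * (ab.1 i : ℤ)) + ∑ i, q i * (ab.2 i : ℤ)

variable (p q : Fin n → ℤ)

lemma Lam_add (a b : WMon n) : Lam n p q (a + b) = Lam n p q a + Lam n p q b := by
  simp only [Lam, Prod.fst_add, Prod.snd_add, Pi.add_apply, Nat.cast_add, mul_add,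
    Finset.sum_add_distrib]
  ring

lemma wdeg_add (a b : WMon n) : wdeg (a + b) = wdeg a + wdeg b := by
  simp only [wdeg, Prod.fst_add, Prod.snd_add, Pi.add_apply, Finset.sum_add_distrib]
  ring

lemma Lam_mk (α β : Fin n → ℕ) :
    Lam n p q (α, β) = (∑ i, p i * (α i : ℤ)) + ∑ i, q i * (β i : ℤ) := rfl

lemma wdeg_mk (α β : Fin n → ℕ) : wdeg ((α, β) : WMon n) = (∑ i, α i) + ∑ i, β i := rfl

lemma Lam_single_x (i : Fin n) : Lam n p q (Pi.single i 1, 0) = p i := by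
  rw [Lam_mk]
  have h1 : ∀ j, q j * (((0 : Fin n → ℕ)) j : ℤ) = 0 := by intro j; simp
  rw [Finset.sum_congr rfl fun j _ => h1 j, Finset.sum_const_zero, add_zero]
  have h2 : ∀ j, p j * ((Pi.single i 1 : Fin n → ℕ) j : ℤ) = if i = j then p i else 0 := by
    intro j
    rcases eq_or_ne j i with rfl | hj
    · simp
    · simp [Pi.single_apply, hj, if_neg (Ne.symm hj)]
  rw [Finset.sum_congr rfl fun j _ => h2 j, Finset.sum_ite_eq]
  simp

lemma Lam_single_D (i : Fin n) : Lam n p q (0, Pi.single i 1) = q i := by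
  rw [Lam_mk]
  have h1 : ∀ j, p j * (((0 : Fin n → ℕ)) j : ℤ) = 0 := by intro j; simp
  rw [Finset.sum_congr rfl fun j _ => h1 j, Finset.sum_const_zero, zero_add]
  have h2 : ∀ j, q j * ((Pi.single i 1 : Fin n → ℕ) j : ℤ) = if i = j then q i else 0 := by
    intro j
    rcases eq_or_ne j i with rfl | hj
    · simp
    · simp [Pi.single_apply, hj, if_neg (Ne.symm hj)]
  rw [Finset.sum_congr rfl fun j _ => h2 j, Finset.sum_ite_eq]
  simp

lemma wdeg_single_x (i : Fin n) : wdeg ((Pi.single i 1, 0) : WMon n) = 1 := by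
  rw [wdeg_mk]
  simp [Finset.sum_pi_single']

lemma wdeg_single_D (i : Fin n) : wdeg ((0, Pi.single i 1) : WMon n) = 1 := by
  rw [wdeg_mk]
  simp [Finset.sum_pi_single']

/-- The span of normal monomials with `Λ`-value at most `L` and total degree less than `d`. -/
def Tlt (L : ℤ) (d : ℕ) : Submodule K A :=
  Submodule.span K (W.basis '' {c | Lam n p q c ≤ L ∧ wdeg c < d})

lemma Tlt_mono {L L' : ℤ} {d d' : ℕ} (hL : L ≤ L') (hd : d ≤ d') :
    Tlt W p q L d ≤ Tlt W p q L' d' := by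
  apply Submodule.span_mono
  apply Set.image_mono
  rintro c ⟨h1, h2⟩
  exact ⟨le_trans h1 hL, lt_of_lt_of_le h2 hd⟩

lemma basis_mem_Tlt {c : WMon n} {L : ℤ} {d : ℕ} (h1 : Lam n p q c ≤ L) (h2 : wdeg c < d) :
    W.basis c ∈ Tlt W p q L d :=
  Submodule.subset_span ⟨c, ⟨h1, h2⟩, rfl⟩

lemma Tlt_xpow_left (α : Fin n → ℕ) (L : ℤ) (d : ℕ) {y : A} (hy : y ∈ Tlt W p q L d) :
    xpow W α * y ∈ Tlt W p q (L + Lam n p q (α, 0)) (d + wdeg ((α, 0) : WMon n)) := by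
  induction hy using Submodule.span_induction with
  | mem y hmem =>
    obtain ⟨c, ⟨h1, h2⟩, rfl⟩ := hmem
    rw [W.basis_eq, xpow_mul_wmono, ← W.basis_eq]
    apply basis_mem_Tlt
    · rw [add_comm ((α, (0:Fin n → ℕ)) : WMon n) c, Lam_add]
      omega
    · rw [add_comm ((α, (0:Fin n → ℕ)) : WMon n) c, wdeg_add]
      omega
  | zero => rw [mul_zero]; exact Submodule.zero_mem _
  | add y z _ _ hy hz => rw [mul_add]; exact Submodule.add_mem _ hy hz
  | smul k y _ hy => rw [mul_smul_comm]; exact Submodule.smul_mem _ _ hy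

lemma Tlt_Dpow_right (β : Fin n → ℕ) (L : ℤ) (d : ℕ) {y : A} (hy : y ∈ Tlt W p q L d) :
    y * Dpow W β ∈ Tlt W p q (L + Lam n p q (0, β)) (d + wdeg ((0, β) : WMon n)) := by
  induction hy using Submodule.span_induction with
  | mem y hmem =>
    obtain ⟨c, ⟨h1, h2⟩, rfl⟩ := hmem
    rw [W.basis_eq, wmono_mul_Dpow, ← W.basis_eq]
    apply basis_mem_Tlt
    · rw [Lam_add]; omega
    · rw [wdeg_add]; omega
  | zero => rw [zero_mul]; exact Submodule.zero_mem _
  | add y z _ _ hy hz => rw [add_mul]; exact Submodule.add_mem _ hy hz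
  | smul k y _ hy => rw [smul_mul_assoc]; exact Submodule.smul_mem _ _ hy

variable (hpq : ∀ i, 0 ≤ p i + q i)
include hpq

lemma Tlt_D_left (i : Fin n) (L : ℤ) (d : ℕ) {y : A} (hy : y ∈ Tlt W p q L d) :
    W.D i * y ∈ Tlt W p q (L + q i) (d + 1) := by
  induction hy using Submodule.span_induction with
  | mem y hmem =>
    obtain ⟨c, ⟨h1, h2⟩, rfl⟩ := hmem
    rw [W.basis_eq, D_mul_wmono, ← W.basis_eq, ← W.basis_eq]
    apply Submodule.add_mem
    · apply basis_mem_Tlt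
      · have hdecomp : ((c.1, c.2 + Pi.single i 1) : WMon n) = c + (0, Pi.single i 1) := by
          ext j <;> simp
        rw [hdecomp, Lam_add, Lam_single_D]
        omega
      · have hdecomp : ((c.1, c.2 + Pi.single i 1) : WMon n) = c + (0, Pi.single i 1) := by
          ext j <;> simp
        rw [hdecomp, wdeg_add, wdeg_single_D]
        omega
    · rcases Nat.eq_zero_or_pos (c.1 i) with h0 | h0
      · rw [h0, zero_smul]; exact Submodule.zero_mem _
      · rw [← Nat.cast_smul_eq_nsmul K]
        apply Submodule.smul_mem
        have hdecomp : c = ((c.1 - Pi.single i 1, c.2) : WMon n) + (Pi.single i 1, 0) := by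
          ext j
          · rcases eq_or_ne j i with rfl | hj
            · simp; omega
            · simp [Pi.single_apply, hj]
          · simp
        apply basis_mem_Tlt
        · have := Lam_add p q ((c.1 - Pi.single i 1, c.2) : WMon n) (Pi.single i 1, 0)
          rw [← hdecomp, Lam_single_x] at this
          have hi := hpq i
          omega
        · have := wdeg_add ((c.1 - Pi.single i 1, c.2) : WMon n) (Pi.single i 1, 0)
          rw [← hdecomp, wdeg_single_x] at this
          omega
  | zero => rw [mul_zero]; exact Submodule.zero_mem _
  | add y z _ _ hy hz => rw [mul_add]; exact Submodule.add_mem _ hy hz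
  | smul k y _ hy => rw [mul_smul_comm]; exact Submodule.smul_mem _ _ hy

end WeylAux
namespace WeylAux
variable {K : Type*} [Field K] {n : ℕ} {A : Type*} [Ring A] [Algebra K A] (W : WeylData K n A)
variable (p q : Fin n → ℤ) (hpq : ∀ i, 0 ≤ p i + q i)

lemma wmono_zero : wmono W.x W.D (0 : WMon n) = 1 := by
  rw [wmono_eq]
  show xpow W 0 * Dpow W 0 = 1
  rw [xpow_zero, Dpow_zero, one_mul]

include hpq in
lemma Dpow_mul_xpow (β α' : Fin n → ℕ) :
    Dpow W β * xpow W α' - W.basis (α', β)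
      ∈ Tlt W p q (Lam n p q (α', β)) (wdeg ((α', β) : WMon n)) := by
  generalize hN : (∑ i, β i) = N
  induction N generalizing β α' with
  | zero =>
    have hβ : β = 0 := by
      funext j
      have := Finset.sum_eq_zero_iff.mp hN j (Finset.mem_univ j)
      exact this
    subst hβ
    rw [Dpow_zero, one_mul, W.basis_eq, wmono_eq]
    show xpow W α' - xpow W α' * Dpow W 0 ∈ _
    rw [Dpow_zero, mul_one, sub_self]
    exact Submodule.zero_mem _
  | succ N ih =>
    have hex : ∃ i, β i ≠ 0 := by
      by_contra hc
      push_neg at hc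
      have : (∑ i, β i) = 0 := Finset.sum_eq_zero fun i _ => hc i
      omega
    obtain ⟨i, hi⟩ := hex
    set β' : Fin n → ℕ := β - Pi.single i 1 with hβ'
    have hdec : Pi.single i 1 + β' = β := by
      funext j
      rcases eq_or_ne j i with rfl | hj
      · simp [hβ']; omega
      · simp [hβ', Pi.single_apply, hj]
    have hsum : (∑ j, β' j) = N := by
      have := congrArg (fun f => ∑ j, f j) hdec
      simp only [Pi.add_apply, Finset.sum_add_distrib] at this
      rw [Finset.sum_pi_single'] at this
      simp at this
      omega
    have hD : Dpow W β = W.D i * Dpow W β' := by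
      rw [← hdec, Dpow_add, Dpow_single]
    have hIH := ih β' α' hsum
    set R := Dpow W β' * xpow W α' - W.basis (α', β') with hR
    have hsplit : Dpow W β * xpow W α' = W.D i * W.basis (α', β') + W.D i * R := by
      rw [hD, mul_assoc, hR, mul_sub]
      abel
    have hDb := D_mul_wmono W i (α', β')
    rw [← W.basis_eq, ← W.basis_eq, ← W.basis_eq] at hDb
    have heq2 : ((α', β').1, (α', β').2 + Pi.single i 1) = ((α', β' + Pi.single i 1) : WMon n) := rfl
    have hβeq : β' + Pi.single i 1 = β := by rw [add_comm]; exact hdec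
    rw [heq2, hβeq] at hDb
    rw [hsplit, hDb]
    have hmain : W.basis (α', β) + (α' i • W.basis (((α', β').1 - Pi.single i 1, (α', β').2)) + W.D i * R)
        - W.basis (α', β)
        ∈ Tlt W p q (Lam n p q (α', β)) (wdeg ((α', β) : WMon n)) := by
      rw [add_sub_cancel_left]
      apply Submodule.add_mem
      · rcases Nat.eq_zero_or_pos (α' i) with h0 | h0
        · show (α' i) • _ ∈ _
          rw [h0, zero_smul]; exact Submodule.zero_mem _
        · show (α' i) • W.basis ((α' - Pi.single i 1, β') : WMon n) ∈ _
          rw [← Nat.cast_smul_eq_nsmul K]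
          apply Submodule.smul_mem
          have hdecomp : ((α', β) : WMon n)
              = ((α' - Pi.single i 1, β') : WMon n) + (Pi.single i 1, Pi.single i 1) := by
            ext j
            · rcases eq_or_ne j i with rfl | hj
              · simp; omega
              · simp [Pi.single_apply, hj]
            · rcases eq_or_ne j i with rfl | hj
              · simp [hβ']; omega
              · simp [hβ', Pi.single_apply, hj]
          have hps : ((Pi.single i 1, Pi.single i 1) : WMon n)
              = ((Pi.single i 1, 0) : WMon n) + (0, Pi.single i 1) := by
            ext j <;> simp
          apply basis_mem_Tlt
          · have hL := Lam_add p q ((α' - Pi.single i 1, β') : WMon n) (Pi.single i 1, Pi.single i 1)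
            rw [← hdecomp] at hL
            have hL2 := Lam_add p q ((Pi.single i 1, 0) : WMon n) ((0, Pi.single i 1) : WMon n)
            rw [← hps, Lam_single_x, Lam_single_D] at hL2
            have := hpq i
            omega
          · have hw := wdeg_add ((α' - Pi.single i 1, β') : WMon n) (Pi.single i 1, Pi.single i 1)
            rw [← hdecomp] at hw
            have hw2 := wdeg_add ((Pi.single i 1, 0) : WMon n) ((0, Pi.single i 1) : WMon n)
            rw [← hps, wdeg_single_x, wdeg_single_D] at hw2
            omega
      · have hmem := Tlt_D_left W p q hpq i _ _ hIH
        apply Tlt_mono W p q (L' := Lam n p q (α', β)) (d' := wdeg ((α', β) : WMon n)) _ _ hmem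
        · have hL : Lam n p q ((α', β) : WMon n) = Lam n p q ((α', β') : WMon n) + q i := by
            have hd2 : ((α', β) : WMon n) = ((α', β') : WMon n) + (0, Pi.single i 1) := by
              ext j
              · simp
              · rcases eq_or_ne j i with rfl | hj
                · simp [hβ']; omega
                · simp [hβ', Pi.single_apply, hj]
            rw [hd2, Lam_add, Lam_single_D]
          omega
        · have hw : wdeg ((α', β) : WMon n) = wdeg ((α', β') : WMon n) + 1 := by
            have hd2 : ((α', β) : WMon n) = ((α', β') : WMon n) + (0, Pi.single i 1) := by
              ext j
              · simp
              · rcases eq_or_ne j i with rfl | hj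
                · simp [hβ']; omega
                · simp [hβ', Pi.single_apply, hj]
            rw [hd2, wdeg_add, wdeg_single_D]
          omega
    convert hmain using 2
    abel

include hpq in
/-- Claim A: the product of two normal monomials is the normal monomial of the sum of the
exponents plus terms of no larger `Λ`-value and strictly smaller total degree. -/
lemma mul_wmono_sub (a b : WMon n) :
    wmono W.x W.D a * wmono W.x W.D b - W.basis (a + b)
      ∈ Tlt W p q (Lam n p q (a + b)) (wdeg (a + b)) := by
  have hsplit : wmono W.x W.D a * wmono W.x W.D b
      = xpow W a.1 * (Dpow W a.2 * xpow W b.1) * Dpow W b.2 := by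
    rw [wmono_eq, wmono_eq]
    simp only [mul_assoc]
  set R := Dpow W a.2 * xpow W b.1 - W.basis (b.1, a.2) with hR
  have hRmem := Dpow_mul_xpow W p q hpq a.2 b.1
  rw [← hR] at hRmem
  have hbasis : xpow W a.1 * W.basis ((b.1, a.2) : WMon n) * Dpow W b.2 = W.basis (a + b) := by
    rw [W.basis_eq, xpow_mul_wmono, wmono_mul_Dpow, ← W.basis_eq]
    congr 1
    ext j
    · simp [add_comm]
    · simp [add_comm]
  have hsplit2 : wmono W.x W.D a * wmono W.x W.D b - W.basis (a + b)
      = xpow W a.1 * R * Dpow W b.2 := by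
    rw [hsplit, ← hbasis, hR, mul_sub, sub_mul]
  rw [hsplit2]
  have h1 := Tlt_xpow_left W p q a.1 _ _ hRmem
  have h2 := Tlt_Dpow_right W p q b.2 _ _ h1
  refine Tlt_mono W p q ?_ ?_ h2
  · have he : a + b = ((b.1, a.2) : WMon n) + ((a.1, 0) : WMon n) + ((0, b.2) : WMon n) := by
      ext j
      · simp [add_comm]
      · simp [add_comm]
    rw [he, Lam_add, Lam_add]
  · have he : a + b = ((b.1, a.2) : WMon n) + ((a.1, 0) : WMon n) + ((0, b.2) : WMon n) := by
      ext j
      · simp [add_comm]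
      · simp [add_comm]
    rw [he, wdeg_add, wdeg_add]

lemma repr_of_mem_Tlt {L : ℤ} {d : ℕ} {y : A} (hy : y ∈ Tlt W p q L d) {c : WMon n}
    (hc : ¬(Lam n p q c ≤ L ∧ wdeg c < d)) : W.basis.repr y c = 0 := by
  by_contra h
  have hmem : c ∈ (W.basis.repr y).support := Finsupp.mem_support_iff.mpr h
  have := (Module.Basis.mem_span_image W.basis).mp hy hmem
  exact hc this

include hpq in
lemma repr_mul_wmono_self (a b : WMon n) :
    W.basis.repr (wmono W.x W.D a * wmono W.x W.D b) (a + b) = 1 := by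
  have h := mul_wmono_sub W p q hpq a b
  set R := wmono W.x W.D a * wmono W.x W.D b - W.basis (a + b) with hR
  have heq : wmono W.x W.D a * wmono W.x W.D b = W.basis (a + b) + R := by rw [hR]; abel
  have hadd : W.basis.repr (W.basis (a + b) + R)
      = W.basis.repr (W.basis (a + b)) + W.basis.repr R := map_add _ _ _
  rw [heq, hadd, Finsupp.add_apply, W.basis.repr_self,
    repr_of_mem_Tlt W p q h (by simp), Finsupp.single_eq_same, add_zero]

include hpq in
lemma repr_mul_wmono_lower {a b c : WMon n} (hne : c ≠ a + b)
    (h0 : W.basis.repr (wmono W.x W.D a * wmono W.x W.D b) c ≠ 0) :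
    Lam n p q c ≤ Lam n p q (a + b) ∧ wdeg c < wdeg (a + b) := by
  have h := mul_wmono_sub W p q hpq a b
  set R := wmono W.x W.D a * wmono W.x W.D b - W.basis (a + b) with hR
  have heq : wmono W.x W.D a * wmono W.x W.D b = W.basis (a + b) + R := by rw [hR]; abel
  have hadd : W.basis.repr (W.basis (a + b) + R)
      = W.basis.repr (W.basis (a + b)) + W.basis.repr R := map_add _ _ _
  rw [heq, hadd, Finsupp.add_apply, W.basis.repr_self, Finsupp.single_eq_of_ne hne,
    zero_add] at h0
  by_contra hc
  exact h0 (repr_of_mem_Tlt W p q h hc)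

end WeylAux
namespace WeylAux
variable {K : Type*} [Field K] {n : ℕ} {A : Type*} [Ring A] [Algebra K A] (W : WeylData K n A)
variable (p q : Fin n → ℤ)

/-- Lex embedding of exponent vectors. -/
noncomputable def fsL (u : Fin n → ℕ) : Lex (Fin n →₀ ℕ) := toLex (Finsupp.equivFunOnFinite.symm u)

lemma fsL_add (u v : Fin n → ℕ) : fsL (u + v) = fsL u + fsL v := by
  unfold fsL
  have h : (Finsupp.equivFunOnFinite.symm (u + v) : Fin n →₀ ℕ)
      = Finsupp.equivFunOnFinite.symm u + Finsupp.equivFunOnFinite.symm v := by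
    ext j
    simp
  rw [h]
  rfl

lemma fsL_inj {u v : Fin n → ℕ} (h : fsL u = fsL v) : u = v := by
  unfold fsL at h
  exact Finsupp.equivFunOnFinite.symm.injective (toLex_inj.mp h)

/-- Value type for the auxiliary total order on monomials. -/
abbrev LL (n : ℕ) := Lex (ℤ × Lex (ℕ × Lex ((Lex (Fin n →₀ ℕ)) × (Lex (Fin n →₀ ℕ)))))

/-- Total, addition-compatible order on monomials refining `(Λ, wdeg)`. -/
noncomputable def Phi (a : WMon n) : LL n :=
  toLex (Lam n p q a, toLex (wdeg a, toLex (fsL a.1, fsL a.2)))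

lemma Phi_add (a b : WMon n) : Phi p q (a + b) = Phi p q a + Phi p q b := by
  have h : Phi p q a + Phi p q b
      = toLex (Lam n p q a + Lam n p q b, toLex (wdeg a + wdeg b,
          toLex (fsL a.1 + fsL b.1, fsL a.2 + fsL b.2))) := rfl
  rw [h]
  unfold Phi
  rw [Lam_add, wdeg_add, Prod.fst_add, Prod.snd_add, fsL_add, fsL_add]

lemma Phi_inj {a b : WMon n} (h : Phi p q a = Phi p q b) : a = b := by
  unfold Phi at h
  have h1 := toLex_inj.mp h
  have h2 := congrArg Prod.snd h1
  simp only at h2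
  have h3 := toLex_inj.mp h2
  have h4 := congrArg Prod.snd h3
  simp only at h4
  have h5 := toLex_inj.mp h4
  have h6 : a.1 = b.1 := fsL_inj (congrArg Prod.fst h5)
  have h7 : a.2 = b.2 := fsL_inj (congrArg Prod.snd h5)
  exact Prod.ext h6 h7

lemma Lam_le_of_Phi_le {a b : WMon n} (h : Phi p q a ≤ Phi p q b) :
    Lam n p q a ≤ Lam n p q b :=
  Prod.Lex.monotone_fst _ _ h

lemma Phi_lt_of_lower {c b : WMon n} (h1 : Lam n p q c ≤ Lam n p q b) (h2 : wdeg c < wdeg b) :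
    Phi p q c < Phi p q b := by
  unfold Phi
  rw [Prod.Lex.lt_iff]
  rcases h1.lt_or_eq with h | h
  · exact Or.inl h
  · refine Or.inr ⟨h, ?_⟩
    rw [Prod.Lex.lt_iff]
    exact Or.inl h2

lemma Phi_add_lt {a b : WMon n} (h : Phi p q a < Phi p q b) (c : WMon n) :
    Phi p q (a + c) < Phi p q (b + c) := by
  rw [Phi_add, Phi_add]
  exact add_lt_add_left h _

lemma Phi_add_le {a b : WMon n} (h : Phi p q a ≤ Phi p q b) (c : WMon n) :
    Phi p q (a + c) ≤ Phi p q (b + c) := by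
  rw [Phi_add, Phi_add]
  exact add_le_add_left h _

lemma Phi_combine {a b a0 b0 : WMon n} (haa : Phi p q a ≤ Phi p q a0)
    (hbb : Phi p q b ≤ Phi p q b0) (hne : ¬(a = a0 ∧ b = b0)) :
    Phi p q (a + b) < Phi p q (a0 + b0) := by
  rcases eq_or_ne a a0 with rfl | hab
  · have hb : b ≠ b0 := fun h => hne ⟨rfl, h⟩
    have hblt : Phi p q b < Phi p q b0 :=
      hbb.lt_of_ne fun h => hb (Phi_inj p q h)
    rw [add_comm a b, add_comm a b0]
    exact Phi_add_lt p q hblt a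
  · have halt : Phi p q a < Phi p q a0 := haa.lt_of_ne fun h => hab (Phi_inj p q h)
    calc Phi p q (a + b) < Phi p q (a0 + b) := Phi_add_lt p q halt b
      _ ≤ Phi p q (a0 + b0) := by
          rw [add_comm a0 b, add_comm a0 b0]
          exact Phi_add_le p q hbb a0

/-- The order function `δ_Λ`. -/
noncomputable def delta (P : A) : WithBot ℤ :=
  (ND W P).sup fun c => ((Lam n p q c : ℤ) : WithBot ℤ)

lemma ND_zero : ND W (0 : A) = ∅ := by simp [ND]

lemma delta_zero : delta W p q (0 : A) = ⊥ := by simp [delta, ND_zero]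

lemma ND_wmono (c : WMon n) : ND W (wmono W.x W.D c) = {c} := by
  rw [ND, ← W.basis_eq, W.basis.repr_self]
  exact Finsupp.support_single_ne_zero _ one_ne_zero

lemma delta_wmono (c : WMon n) :
    delta W p q (wmono W.x W.D c) = ((Lam n p q c : ℤ) : WithBot ℤ) := by
  rw [delta, ND_wmono, Finset.sup_singleton]

lemma ND_nonempty {P : A} (hP : P ≠ 0) : (ND W P).Nonempty := by
  rw [Finset.nonempty_iff_ne_empty]
  intro h
  apply hP
  have : W.basis.repr P = 0 := Finsupp.support_eq_empty.mp h
  simpa using (LinearEquiv.map_eq_zero_iff W.basis.repr).mp this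

lemma exists_max {P : A} (hP : P ≠ 0) :
    ∃ a ∈ ND W P, ∀ a' ∈ ND W P, Phi p q a' ≤ Phi p q a :=
  Finset.exists_max_image (ND W P) (Phi p q) (ND_nonempty W hP)

lemma delta_eq_of_max {P : A} {a : WMon n} (ha : a ∈ ND W P)
    (hmax : ∀ a' ∈ ND W P, Phi p q a' ≤ Phi p q a) :
    delta W p q P = ((Lam n p q a : ℤ) : WithBot ℤ) := by
  apply le_antisymm
  · exact Finset.sup_le fun c hc => WithBot.coe_le_coe.mpr (Lam_le_of_Phi_le p q (hmax c hc))
  · exact Finset.le_sup (f := fun c => ((Lam n p q c : ℤ) : WithBot ℤ)) ha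

lemma repr_mul_eq (P Q : A) (c : WMon n) :
    W.basis.repr (P * Q) c = ∑ a ∈ ND W P, ∑ b ∈ ND W Q,
      W.basis.repr P a * W.basis.repr Q b
        * W.basis.repr (wmono W.x W.D a * wmono W.x W.D b) c := by
  have hP : P = ∑ a ∈ ND W P, W.basis.repr P a • W.basis a := by
    conv_lhs => rw [← W.basis.linearCombination_repr P]
    rw [Finsupp.linearCombination_apply, Finsupp.sum]
    rfl
  have hQ : Q = ∑ b ∈ ND W Q, W.basis.repr Q b • W.basis b := by
    conv_lhs => rw [← W.basis.linearCombination_repr Q]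
    rw [Finsupp.linearCombination_apply, Finsupp.sum]
    rfl
  conv_lhs => rw [hP, hQ]
  rw [Finset.sum_mul, map_sum, Finsupp.finset_sum_apply]
  apply Finset.sum_congr rfl
  intro a ha
  rw [Finset.mul_sum, map_sum, Finsupp.finset_sum_apply]
  apply Finset.sum_congr rfl
  intro b hb
  rw [smul_mul_smul_comm, map_smul, Finsupp.smul_apply, smul_eq_mul,
    W.basis_eq a, W.basis_eq b, mul_assoc]

variable (hpq : ∀ i, 0 ≤ p i + q i)
include hpq

lemma repr_vanish {a0 b0 a b : WMon n} (haa : Phi p q a ≤ Phi p q a0)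
    (hbb : Phi p q b ≤ Phi p q b0) (hne : ¬(a = a0 ∧ b = b0)) :
    W.basis.repr (wmono W.x W.D a * wmono W.x W.D b) (a0 + b0) = 0 := by
  by_contra h0
  have hlt : Phi p q (a + b) < Phi p q (a0 + b0) := Phi_combine p q haa hbb hne
  rcases eq_or_ne (a0 + b0) (a + b) with heq | hne2
  · rw [heq] at hlt
    exact lt_irrefl _ hlt
  · have hlow := repr_mul_wmono_lower W p q hpq hne2 h0
    have hlt2 : Phi p q (a0 + b0) < Phi p q (a + b) :=
      Phi_lt_of_lower p q hlow.1 hlow.2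
    exact lt_irrefl _ (hlt.trans hlt2)

lemma repr_mul_of_max {P Q : A} {a0 b0 : WMon n} (ha0 : a0 ∈ ND W P) (hb0 : b0 ∈ ND W Q)
    (hmaxa : ∀ a' ∈ ND W P, Phi p q a' ≤ Phi p q a0)
    (hmaxb : ∀ b' ∈ ND W Q, Phi p q b' ≤ Phi p q b0) :
    W.basis.repr (P * Q) (a0 + b0) = W.basis.repr P a0 * W.basis.repr Q b0 := by
  rw [repr_mul_eq]
  rw [Finset.sum_eq_single_of_mem a0 ha0 (fun a ha hane => Finset.sum_eq_zero fun b hb => by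
    rw [repr_vanish W p q hpq (hmaxa a ha) (hmaxb b hb) fun h => hane h.1, mul_zero])]
  rw [Finset.sum_eq_single_of_mem b0 hb0 (fun b hb hbne => by
    rw [repr_vanish W p q hpq (hmaxa a0 ha0) (hmaxb b hb) fun h => hbne h.2, mul_zero])]
  rw [repr_mul_wmono_self W p q hpq, mul_one]

lemma delta_mul (P Q : A) : delta W p q (P * Q) = delta W p q P + delta W p q Q := by
  by_cases hP : P = 0
  · rw [hP, zero_mul, delta_zero, WithBot.bot_add]
  by_cases hQ : Q = 0
  · rw [hQ, mul_zero, delta_zero, WithBot.add_bot]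
  obtain ⟨a0, ha0, hmaxa⟩ := exists_max W p q hP
  obtain ⟨b0, hb0, hmaxb⟩ := exists_max W p q hQ
  have hPa : delta W p q P = ((Lam n p q a0 : ℤ) : WithBot ℤ) := delta_eq_of_max W p q ha0 hmaxa
  have hQb : delta W p q Q = ((Lam n p q b0 : ℤ) : WithBot ℤ) := delta_eq_of_max W p q hb0 hmaxb
  have hcoeff : W.basis.repr (P * Q) (a0 + b0) = W.basis.repr P a0 * W.basis.repr Q b0 :=
    repr_mul_of_max W p q hpq ha0 hb0 hmaxa hmaxb
  have hmem : a0 + b0 ∈ ND W (P * Q) := by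
    rw [ND, Finsupp.mem_support_iff, hcoeff]
    exact mul_ne_zero (Finsupp.mem_support_iff.mp ha0) (Finsupp.mem_support_iff.mp hb0)
  apply le_antisymm
  · apply Finset.sup_le
    intro c hc
    have hcne : W.basis.repr (P * Q) c ≠ 0 := Finsupp.mem_support_iff.mp hc
    rw [repr_mul_eq] at hcne
    obtain ⟨a, ha, hane⟩ := Finset.exists_ne_zero_of_sum_ne_zero hcne
    obtain ⟨b, hb, hbne⟩ := Finset.exists_ne_zero_of_sum_ne_zero hane
    have h3 : W.basis.repr (wmono W.x W.D a * wmono W.x W.D b) c ≠ 0 := by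
      intro h
      rw [h, mul_zero] at hbne
      exact hbne rfl
    have hLc : Lam n p q c ≤ Lam n p q a + Lam n p q b := by
      rcases eq_or_ne c (a + b) with rfl | hne
      · rw [← Lam_add]
      · have := (repr_mul_wmono_lower W p q hpq hne h3).1
        rw [Lam_add] at this
        exact this
    calc ((Lam n p q c : ℤ) : WithBot ℤ)
        ≤ ((Lam n p q a + Lam n p q b : ℤ) : WithBot ℤ) := WithBot.coe_le_coe.mpr hLc
      _ = ((Lam n p q a : ℤ) : WithBot ℤ) + ((Lam n p q b : ℤ) : WithBot ℤ) := WithBot.coe_add _ _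
      _ ≤ delta W p q P + delta W p q Q := by
          rw [hPa, hQb]
          exact add_le_add (WithBot.coe_le_coe.mpr (Lam_le_of_Phi_le p q (hmaxa a ha)))
            (WithBot.coe_le_coe.mpr (Lam_le_of_Phi_le p q (hmaxb b hb)))
  · rw [hPa, hQb, ← WithBot.coe_add, ← Lam_add]
    exact Finset.le_sup (f := fun c => ((Lam n p q c : ℤ) : WithBot ℤ)) hmem

end WeylAux
namespace WeylAux
variable {K : Type*} [Field K] {n : ℕ} {A : Type*} [Ring A] [Algebra K A] (W : WeylData K n A)
variable (p q : Fin n → ℤ)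

lemma Lam_zero : Lam n p q 0 = 0 := by
  simp [Lam]

lemma delta_scalar (c : K) (hc : c ≠ 0) : delta W p q (algebraMap K A c) = 0 := by
  have h1 : (1 : A) = W.basis 0 := by rw [W.basis_eq, wmono_zero]
  have h2 : algebraMap K A c = c • W.basis 0 := by
    rw [Algebra.algebraMap_eq_smul_one, h1]
  rw [h2, delta, ND, map_smul, W.basis.repr_self, Finsupp.smul_single, smul_eq_mul, mul_one,
    Finsupp.support_single_ne_zero _ hc, Finset.sup_singleton, Lam_zero]
  rfl

lemma delta_bot_iff (P : A) : delta W p q P = ⊥ ↔ P = 0 := by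
  constructor
  · intro h
    by_contra hP
    obtain ⟨a, ha, hmax⟩ := exists_max W p q hP
    rw [delta_eq_of_max W p q ha hmax] at h
    exact WithBot.coe_ne_bot h
  · intro h
    rw [h]
    exact delta_zero W p q

lemma delta_add_le (P Q : A) : delta W p q (P + Q) ≤ max (delta W p q P) (delta W p q Q) := by
  have hsub : ND W (P + Q) ⊆ ND W P ∪ ND W Q := by
    rw [ND, ND, ND, map_add]
    exact Finsupp.support_add
  calc delta W p q (P + Q)
      ≤ (ND W P ∪ ND W Q).sup fun c => ((Lam n p q c : ℤ) : WithBot ℤ) :=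
        Finset.sup_mono hsub
    _ = max (delta W p q P) (delta W p q Q) := by
        rw [Finset.sup_union, delta, delta]

lemma delta_isAdmissible (hpq : ∀ i, 0 ≤ p i + q i) : IsAdmissible W (delta W p q) := by
  refine ⟨⟨delta_scalar W p q, delta_bot_iff W p q, delta_add_le W p q,
    delta_mul W p q hpq⟩, ?_⟩
  intro P _
  exact (Finset.sup_congr rfl fun c _ => delta_wmono W p q c).symm

lemma delta_unique {d : A → WithBot ℤ} (hadm : IsAdmissible W d)
    (hval : ∀ ab : WMon n, d (wmono W.x W.D ab) = ((Lam n p q ab : ℤ) : WithBot ℤ)) :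
    d = delta W p q := by
  funext P
  by_cases hP : P = 0
  · rw [hP, (hadm.1.bot_iff 0).mpr rfl, (delta_bot_iff W p q 0).mpr rfl]
  · rw [hadm.2 P hP, Finset.sup_congr rfl fun c _ => hval c]
    rfl

end WeylAux

/-- given a linear form `Λ` with integer coefficients `(p,q)`, `pᵢ+qᵢ ≥ 0`,
there is a unique admissible order function `δ_Λ` with `δ_Λ(x^α D^β) = Λ(α,β)`; it is
given by `δ_Λ(0) = -∞` and `δ_Λ(P) = max{Λ(α,β) : (α,β) ∈ N(P)}` for nonzero `P`. -/
theorem exists_unique_admissible (K : Type*) [Field K] (n : ℕ) (A : Type*) [Ring A]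
    [Algebra K A] (W : WeylData K n A) (p q : Fin n → ℤ) (hpq : ∀ i, 0 ≤ p i + q i) :
    (∃! δ : A → WithBot ℤ, IsAdmissible W δ ∧
      ∀ ab : WMon n, δ (wmono W.x W.D ab) =
        (((∑ i, p i * (ab.1 i : ℤ)) + ∑ i, q i * (ab.2 i : ℤ) : ℤ) : WithBot ℤ)) ∧
    ∀ δ : A → WithBot ℤ,
      (IsAdmissible W δ ∧ ∀ ab : WMon n, δ (wmono W.x W.D ab) =
        (((∑ i, p i * (ab.1 i : ℤ)) + ∑ i, q i * (ab.2 i : ℤ) : ℤ) : WithBot ℤ)) →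
      δ 0 = ⊥ ∧ ∀ P : A, P ≠ 0 → δ P = (ND W P).sup fun ab =>
        (((∑ i, p i * (ab.1 i : ℤ)) + ∑ i, q i * (ab.2 i : ℤ) : ℤ) : WithBot ℤ) := by
  constructor
  · refine ⟨WeylAux.delta W p q, ⟨WeylAux.delta_isAdmissible W p q hpq,
      fun ab => WeylAux.delta_wmono W p q ab⟩, ?_⟩
    intro d ⟨hadm, hval⟩
    exact WeylAux.delta_unique W p q hadm hval
  · rintro δ ⟨hadm, hval⟩
    refine ⟨(hadm.1.bot_iff 0).mpr rfl, ?_⟩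
    intro P hP
    rw [hadm.2 P hP]
    exact Finset.sup_congr rfl fun c _ => hval c
end

section
/- Let δ be an admissible order function on A_n(K) and ≺_δ the monomial ordering on ℕ^{2n} refining δ by a fixed well monomial ordering ≺. For nonzero P, Q ∈ A_n(K): exp_δ(PQ) = exp_δ(P) + exp_δ(Q), where exp_δ denotes the ≺_δ-maximal element of the Newton diagram. -/
namespace ExpMul

variable {A : Type*} [Ring A] {n : ℕ}

def Pp (g : Fin n → A) (m : Fin n → ℕ) : A := (List.ofFn fun i => g i ^ m i).prod

lemma Pp_zero (g : Fin n → A) : Pp g 0 = 1 := by simp [Pp]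

lemma commute_Pp {g : Fin n → A} {a : A} (h : ∀ j, Commute a (g j)) (m : Fin n → ℕ) :
    Commute a (Pp g m) := by
  apply Commute.list_prod_right
  intro b hb
  obtain ⟨i, hi⟩ := List.mem_ofFn.1 hb
  exact hi ▸ (h i).pow_right _

lemma Pp_succ {k : ℕ} (g : Fin (k+1) → A) (m : Fin (k+1) → ℕ) :
    Pp g m = g 0 ^ m 0 * Pp (fun i => g i.succ) (fun i => m i.succ) := by
  simp [Pp, List.ofFn_succ]

lemma Pp_add : ∀ {n : ℕ} (g : Fin n → A), (∀ i j, Commute (g i) (g j)) →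
    ∀ m m' : Fin n → ℕ, Pp g (m + m') = Pp g m * Pp g m' := by
  intro n
  induction n with
  | zero => intro g _ m m'; simp [Pp]
  | succ k ih =>
      intro g hg m m'
      rw [Pp_succ, Pp_succ g m, Pp_succ g m']
      have hrfl : (fun i : Fin k => (m + m') i.succ) =
          (fun i => m i.succ) + (fun i => m' i.succ) := rfl
      rw [hrfl, ih (fun i => g i.succ) (fun i j => hg _ _)]
      have hc : Commute (g 0 ^ m' 0) (Pp (fun i => g i.succ) (fun i => m i.succ)) :=
        (commute_Pp (fun j => hg 0 j.succ) _).pow_left _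
      rw [Pi.add_apply, pow_add, mul_assoc, mul_assoc,
        ← mul_assoc (g 0 ^ m' 0), hc.eq, mul_assoc]

lemma Pp_single : ∀ {n : ℕ} (g : Fin n → A) (i : Fin n) (c : ℕ),
    Pp g (Pi.single i c) = g i ^ c := by
  intro n
  induction n with
  | zero => exact fun g i => i.elim0
  | succ k ih =>
      intro g i c
      rw [Pp_succ]
      cases i using Fin.cases with
      | zero =>
          have h1 : (fun j : Fin k => (Pi.single (0 : Fin (k+1)) c : Fin (k+1) → ℕ) j.succ)
              = (0 : Fin k → ℕ) := by
            funext j; simp [Pi.single_apply, (Fin.succ_ne_zero j)]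
          rw [h1, Pp_zero, Pi.single_eq_same, mul_one]
      | succ j =>
          have h0 : (Pi.single (Fin.succ j) c : Fin (k+1) → ℕ) (0 : Fin (k+1)) = 0 := by
            simp [Pi.single_apply, (Fin.succ_ne_zero j).symm]
          have h1 : (fun l : Fin k => (Pi.single (Fin.succ j) c : Fin (k+1) → ℕ) l.succ)
              = (Pi.single j c : Fin k → ℕ) := by
            funext l; simp [Pi.single_apply, Fin.succ_inj]
          rw [h0, h1, ih, pow_zero, one_mul]

lemma DPp (x D : Fin n → A)
    (hxx : ∀ i j, Commute (x i) (x j))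
    (hDx : ∀ i j, D i * x j = x j * D i + (if i = j then 1 else 0)) :
    ∀ (α : Fin n → ℕ) (i : Fin n),
    D i * Pp x α = Pp x α * D i + (α i) • Pp x (α - Pi.single i 1) := by
  suffices h : ∀ (N : ℕ) (α : Fin n → ℕ), (∑ t, α t) = N → ∀ i,
      D i * Pp x α = Pp x α * D i + (α i) • Pp x (α - Pi.single i 1) from
    fun α i => h _ α rfl i
  intro N
  induction N using Nat.strong_induction_on with
  | _ N ih =>
    intro α hα i
    by_cases h0 : α = 0
    · subst h0; simp [Pp_zero]
    · obtain ⟨j, hj⟩ := Function.ne_iff.1 h0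
      simp only [Pi.zero_apply] at hj
      set α' : Fin n → ℕ := α - Pi.single j 1 with hα'def
      have hαj : 1 ≤ α j := Nat.one_le_iff_ne_zero.2 hj
      have hlt : (∑ t, α' t) < N := by
        rw [← hα]
        apply Finset.sum_lt_sum
        · intro t _
          simp only [hα'def, Pi.sub_apply, Pi.single_apply]
          split_ifs <;> omega
        · exact ⟨j, Finset.mem_univ j, by
            simp only [hα'def, Pi.sub_apply, Pi.single_eq_same]; omega⟩
      have IH := fun i' => ih _ hlt α' rfl i'
      have hsplit : Pp x α = x j * Pp x α' := by
        have hsum : Pi.single j 1 + α' = α := by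
          funext t
          rcases eq_or_ne t j with rfl | h
          · simp only [hα'def, Pi.add_apply, Pi.sub_apply, Pi.single_eq_same]; omega
          · simp only [hα'def, Pi.add_apply, Pi.sub_apply, Pi.single_eq_of_ne h]; omega
        conv_lhs => rw [← hsum]
        rw [Pp_add x hxx, Pp_single, pow_one]
      by_cases hij : i = j
      · subst hij
        have hα'α : α' = α - Pi.single i 1 := hα'def
        have key : (α' i) • (x i * Pp x (α' - Pi.single i 1)) + Pp x α'
            = (α i) • Pp x α' := by
          rcases Nat.eq_zero_or_pos (α' i) with h|h
          · have hαi : α i = 1 := by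
              have h2 := h
              simp only [hα'def, Pi.sub_apply, Pi.single_eq_same] at h2
              omega
            rw [h, zero_smul, zero_add, hαi, one_smul]
          · have hx : x i * Pp x (α' - Pi.single i 1) = Pp x α' := by
              have hα'i : 1 ≤ α' i := h
              have hsum : Pi.single i 1 + (α' - Pi.single i 1) = α' := by
                funext t
                rcases eq_or_ne t i with rfl | hh
                · simp only [Pi.add_apply, Pi.sub_apply, Pi.single_eq_same]; omega
                · simp only [Pi.add_apply, Pi.sub_apply, Pi.single_eq_of_ne hh]; omega
              conv_rhs => rw [← hsum]
              rw [Pp_add x hxx, Pp_single, pow_one]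
            have hαi : α i = α' i + 1 := by
              simp only [hα'def, Pi.sub_apply, Pi.single_eq_same]
              omega
            rw [hx, hαi, succ_nsmul]
        calc D i * Pp x α = D i * (x i * Pp x α') := by rw [hsplit]
          _ = (x i * D i + 1) * Pp x α' := by rw [← mul_assoc, hDx i i, if_pos rfl]
          _ = x i * (D i * Pp x α') + Pp x α' := by rw [add_mul, one_mul, mul_assoc]
          _ = x i * (Pp x α' * D i + (α' i) • Pp x (α' - Pi.single i 1)) + Pp x α' := by
              rw [IH i]
          _ = (x i * Pp x α') * D i +
              ((α' i) • (x i * Pp x (α' - Pi.single i 1)) + Pp x α') := by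
              rw [mul_add, mul_smul_comm, ← mul_assoc, add_assoc]
          _ = Pp x α * D i + (α i) • Pp x (α - Pi.single i 1) := by
              rw [← hsplit, key, ← hα'α]
      · have h1 : α' i = α i := by
          simp only [hα'def, Pi.sub_apply, Pi.single_apply, if_neg hij]
          omega
        have h2 : x j * Pp x (α' - Pi.single i 1) = Pp x (α - Pi.single i 1) := by
          have hsum : Pi.single j 1 + (α' - Pi.single i 1) = α - Pi.single i 1 := by
            funext t
            rcases eq_or_ne t j with rfl | h
            · simp only [hα'def, Pi.add_apply, Pi.sub_apply, Pi.single_eq_same,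
                Pi.single_eq_of_ne (Ne.symm hij)]
              omega
            · simp only [hα'def, Pi.add_apply, Pi.sub_apply, Pi.single_eq_of_ne h]
              omega
          conv_rhs => rw [← hsum]
          rw [Pp_add x hxx, Pp_single, pow_one]
        calc D i * Pp x α = D i * (x j * Pp x α') := by rw [hsplit]
          _ = (x j * D i + 0) * Pp x α' := by rw [← mul_assoc, hDx i j, if_neg hij]
          _ = x j * (D i * Pp x α') := by rw [add_zero, mul_assoc]
          _ = x j * (Pp x α' * D i + (α' i) • Pp x (α' - Pi.single i 1)) := by rw [IH i]
          _ = (x j * Pp x α') * D i + (α' i) • (x j * Pp x (α' - Pi.single i 1)) := by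
              rw [mul_add, mul_smul_comm, ← mul_assoc]
          _ = Pp x α * D i + (α i) • Pp x (α - Pi.single i 1) := by
              rw [← hsplit, h1, h2]


section WeylLemmas

variable {K : Type*} [Field K] {n : ℕ} {A : Type*} [Ring A] [Algebra K A]
variable (W : WeylData K n A)

lemma hxxC : ∀ i j, Commute (W.x i) (W.x j) := W.hxx
lemma hDDC : ∀ i j, Commute (W.D i) (W.D j) := W.hDD

lemma wmono_eq (ab : WMon n) : wmono W.x W.D ab = Pp W.x ab.1 * Pp W.D ab.2 := rfl

lemma wmono_mul_D (α β : Fin n → ℕ) (i : Fin n) :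
    wmono W.x W.D (α, β) * W.D i = wmono W.x W.D (α, β + Pi.single i 1) := by
  show (Pp W.x α * Pp W.D β) * W.D i = Pp W.x α * Pp W.D (β + Pi.single i 1)
  rw [Pp_add W.D (hDDC W), mul_assoc, Pp_single, pow_one]

lemma D_mul_Pp (β : Fin n → ℕ) (i : Fin n) :
    W.D i * Pp W.D β = Pp W.D (β + Pi.single i 1) := by
  rw [add_comm, Pp_add W.D (hDDC W), Pp_single, pow_one]

lemma D_mul_wmono (i : Fin n) (α β : Fin n → ℕ) :
    W.D i * wmono W.x W.D (α, β) = wmono W.x W.D (α, β + Pi.single i 1)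
      + (α i) • wmono W.x W.D (α - Pi.single i 1, β) := by
  show W.D i * (Pp W.x α * Pp W.D β)
      = Pp W.x α * Pp W.D (β + Pi.single i 1)
        + (α i) • (Pp W.x (α - Pi.single i 1) * Pp W.D β)
  rw [← mul_assoc, DPp W.x W.D (hxxC W) W.hDx α i, add_mul, smul_mul_assoc,
    mul_assoc, D_mul_Pp]

def Lo (c : WMon n) : Submodule K A :=
  Submodule.span K
    {y | ∃ gm γ, γ ≠ (0 : Fin n → ℕ) ∧ gm + ((γ, γ) : WMon n) = c ∧ y = wmono W.x W.D gm}

lemma Lo_le (c : WMon n) (d : Fin n → ℕ) : Lo W c ≤ Lo W (c + (d, d)) := by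
  apply Submodule.span_mono
  rintro y ⟨g, γ, hγ, hgc, rfl⟩
  refine ⟨g, γ + d, ?_, ?_, rfl⟩
  · intro hc
    apply hγ
    funext t
    have h := congrFun hc t
    simp only [Pi.add_apply, Pi.zero_apply] at h ⊢
    omega
  · rw [← hgc, add_assoc]
    rfl

theorem mul_key (a b : WMon n) :
    wmono W.x W.D a * wmono W.x W.D b - wmono W.x W.D (a + b) ∈ Lo W (a + b) := by
  suffices h : ∀ (N : ℕ) (a b : WMon n), (∑ t, a.2 t) = N →
      wmono W.x W.D a * wmono W.x W.D b - wmono W.x W.D (a + b) ∈ Lo W (a + b) from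
    h _ a b rfl
  intro N
  induction N using Nat.strong_induction_on with
  | _ N ih =>
  intro a b hN
  by_cases h0 : a.2 = 0
  · have h1 : wmono W.x W.D a * wmono W.x W.D b = wmono W.x W.D (a + b) := by
      show (Pp W.x a.1 * Pp W.D a.2) * (Pp W.x b.1 * Pp W.D b.2)
          = Pp W.x (a.1 + b.1) * Pp W.D (a.2 + b.2)
      rw [h0, Pp_zero, mul_one, zero_add, Pp_add W.x (hxxC W), mul_assoc]
    rw [h1, sub_self]
    exact zero_mem _
  · obtain ⟨j, hj⟩ := Function.ne_iff.1 h0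
    simp only [Pi.zero_apply] at hj
    have haj : 1 ≤ a.2 j := Nat.one_le_iff_ne_zero.2 hj
    set β' : Fin n → ℕ := a.2 - Pi.single j 1 with hβ'def
    have hβ' : β' + Pi.single j 1 = a.2 := by
      funext t
      rcases eq_or_ne t j with rfl | h
      · simp only [hβ'def, Pi.add_apply, Pi.sub_apply, Pi.single_eq_same]; omega
      · simp only [hβ'def, Pi.add_apply, Pi.sub_apply, Pi.single_eq_of_ne h]; omega
    have h1 : wmono W.x W.D a = wmono W.x W.D (a.1, β') * W.D j := by
      rw [wmono_mul_D, hβ']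
    have h2 : W.D j * wmono W.x W.D b
        = wmono W.x W.D (b.1, b.2 + Pi.single j 1)
          + (b.1 j) • wmono W.x W.D (b.1 - Pi.single j 1, b.2) :=
      D_mul_wmono W j b.1 b.2
    have hprod : wmono W.x W.D a * wmono W.x W.D b
        = wmono W.x W.D (a.1, β') * wmono W.x W.D (b.1, b.2 + Pi.single j 1)
          + (b.1 j) • (wmono W.x W.D (a.1, β') *
              wmono W.x W.D (b.1 - Pi.single j 1, b.2)) := by
      rw [h1, mul_assoc, h2, mul_add, mul_smul_comm]
    have hlt : (∑ t, β' t) < N := by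
      rw [← hN]
      apply Finset.sum_lt_sum
      · intro t _
        simp only [hβ'def, Pi.sub_apply, Pi.single_apply]
        split_ifs <;> omega
      · exact ⟨j, Finset.mem_univ j, by
          simp only [hβ'def, Pi.sub_apply, Pi.single_eq_same]; omega⟩
    have IH1 := ih _ hlt (a.1, β') (b.1, b.2 + Pi.single j 1) rfl
    have IH2 := ih _ hlt (a.1, β') (b.1 - Pi.single j 1, b.2) rfl
    have heq1 : ((a.1, β') : WMon n) + (b.1, b.2 + Pi.single j 1) = a + b := by
      rw [Prod.ext_iff]
      constructor
      · rfl
      · show β' + (b.2 + Pi.single j 1) = a.2 + b.2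
        funext t
        rcases eq_or_ne t j with rfl | h
        · simp only [hβ'def, Pi.add_apply, Pi.sub_apply, Pi.single_eq_same]; omega
        · simp only [hβ'def, Pi.add_apply, Pi.sub_apply, Pi.single_eq_of_ne h]; omega
    rw [hprod]
    have e1 : wmono W.x W.D (a.1, β') * wmono W.x W.D (b.1, b.2 + Pi.single j 1)
        - wmono W.x W.D (a + b) ∈ Lo W (a + b) := by
      rw [← heq1]; exact IH1
    have e2 : (b.1 j) • (wmono W.x W.D (a.1, β') *
        wmono W.x W.D (b.1 - Pi.single j 1, b.2)) ∈ Lo W (a + b) := by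
      rcases Nat.eq_zero_or_pos (b.1 j) with h | h
      · rw [h, zero_smul]; exact zero_mem _
      · have hc : (((a.1, β') : WMon n) + (b.1 - Pi.single j 1, b.2))
            + ((Pi.single j 1, Pi.single j 1) : WMon n) = a + b := by
          rw [Prod.ext_iff]
          constructor
          · show a.1 + (b.1 - Pi.single j 1) + Pi.single j 1 = a.1 + b.1
            funext t
            rcases eq_or_ne t j with rfl | ht
            · simp only [Pi.add_apply, Pi.sub_apply, Pi.single_eq_same]; omega
            · simp only [Pi.add_apply, Pi.sub_apply, Pi.single_eq_of_ne ht]; omega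
          · show β' + b.2 + Pi.single j 1 = a.2 + b.2
            funext t
            rcases eq_or_ne t j with rfl | ht
            · simp only [hβ'def, Pi.add_apply, Pi.sub_apply, Pi.single_eq_same]; omega
            · simp only [hβ'def, Pi.add_apply, Pi.sub_apply, Pi.single_eq_of_ne ht]; omega
        have hsub : Lo W (((a.1, β') : WMon n) + (b.1 - Pi.single j 1, b.2)) ≤ Lo W (a + b) :=
          hc ▸ Lo_le W _ (Pi.single j 1)
        have hsne : (Pi.single j 1 : Fin n → ℕ) ≠ 0 := by
          intro hc0
          have := congrFun hc0 j
          simp at this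
        have m1 : wmono W.x W.D (a.1, β') * wmono W.x W.D (b.1 - Pi.single j 1, b.2)
            - wmono W.x W.D (((a.1, β') : WMon n) + (b.1 - Pi.single j 1, b.2))
            ∈ Lo W (a + b) := hsub IH2
        have m2 : wmono W.x W.D (((a.1, β') : WMon n) + (b.1 - Pi.single j 1, b.2))
            ∈ Lo W (a + b) :=
          Submodule.subset_span ⟨_, Pi.single j 1, hsne, hc, rfl⟩
        have hridge : wmono W.x W.D (a.1, β') * wmono W.x W.D (b.1 - Pi.single j 1, b.2)
            = (wmono W.x W.D (a.1, β') * wmono W.x W.D (b.1 - Pi.single j 1, b.2)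
              - wmono W.x W.D (((a.1, β') : WMon n) + (b.1 - Pi.single j 1, b.2)))
              + wmono W.x W.D (((a.1, β') : WMon n) + (b.1 - Pi.single j 1, b.2)) := by
          abel
        rw [hridge, smul_add]
        exact add_mem (nsmul_mem m1 _) (nsmul_mem m2 _)
    have hre : wmono W.x W.D (a.1, β') * wmono W.x W.D (b.1, b.2 + Pi.single j 1)
        + (b.1 j) • (wmono W.x W.D (a.1, β') * wmono W.x W.D (b.1 - Pi.single j 1, b.2))
        - wmono W.x W.D (a + b)
        = (wmono W.x W.D (a.1, β') * wmono W.x W.D (b.1, b.2 + Pi.single j 1)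
            - wmono W.x W.D (a + b))
          + (b.1 j) • (wmono W.x W.D (a.1, β') *
              wmono W.x W.D (b.1 - Pi.single j 1, b.2)) := by
      abel
    rw [hre]
    exact add_mem e1 e2

end WeylLemmas


section OrderLemmas

variable {K : Type*} [Field K] {n : ℕ} {A : Type*} [Ring A] [Algebra K A]
variable {δ : A → WithBot ℤ}

lemma δ_one (h : IsOrderFunction K δ) : δ 1 = 0 := by
  have h1 := h.scalar 1 one_ne_zero
  rwa [map_one] at h1

lemma δ_list (h : IsOrderFunction K δ) : ∀ l : List A, δ l.prod = (l.map δ).sum := by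
  intro l
  induction l with
  | nil => simpa using δ_one h
  | cons a l ihl => rw [List.prod_cons, h.mul, ihl, List.map_cons, List.sum_cons]

lemma δ_pow (h : IsOrderFunction K δ) (a : A) : ∀ k : ℕ, δ (a ^ k) = k • δ a := by
  intro k
  induction k with
  | zero => rw [pow_zero, δ_one h, zero_nsmul]
  | succ m ihm => rw [pow_succ, h.mul, ihm, succ_nsmul]

lemma δ_Pp (h : IsOrderFunction K δ) (g : Fin n → A) (m : Fin n → ℕ) :
    δ (Pp g m) = ∑ i, m i • δ (g i) := by
  rw [Pp, δ_list h, List.map_ofFn, List.sum_ofFn]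
  exact Finset.sum_congr rfl fun i _ => δ_pow h _ _

variable (W : WeylData K n A)

lemma δ_wm (h : IsOrderFunction K δ) (u : WMon n) :
    δ (wmono W.x W.D u) = (∑ i, u.1 i • δ (W.x i)) + ∑ i, u.2 i • δ (W.D i) := by
  rw [wmono_eq, h.mul, δ_Pp h, δ_Pp h]

lemma δ_wm_add (h : IsOrderFunction K δ) (u v : WMon n) :
    δ (wmono W.x W.D (u + v)) = δ (wmono W.x W.D u) + δ (wmono W.x W.D v) := by
  rw [δ_wm W h, δ_wm W h, δ_wm W h]
  simp only [Prod.fst_add, Prod.snd_add, Pi.add_apply, add_nsmul, Finset.sum_add_distrib]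
  abel

lemma wm_ne_zero (u : WMon n) : wmono W.x W.D u ≠ 0 := by
  rw [← W.basis_eq]; exact W.basis.ne_zero u

lemma δ_wm_ne_bot (h : IsOrderFunction K δ) (u : WMon n) : δ (wmono W.x W.D u) ≠ ⊥ :=
  fun hb => wm_ne_zero W u ((h.bot_iff _).1 hb)

lemma wm_zero : wmono W.x W.D (0 : WMon n) = 1 := by
  rw [wmono_eq]
  show Pp W.x 0 * Pp W.D 0 = 1
  rw [Pp_zero, Pp_zero, one_mul]

lemma gen_nonneg (hadm : IsAdmissible W δ) (i : Fin n) : 0 ≤ δ (W.x i) + δ (W.D i) := by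
  obtain ⟨h, hsup⟩ := hadm
  have hwm : wmono W.x W.D ((Pi.single i 1, Pi.single i 1) : WMon n) = W.x i * W.D i := by
    rw [wmono_eq]
    show Pp W.x (Pi.single i 1) * Pp W.D (Pi.single i 1) = _
    rw [Pp_single, Pp_single, pow_one, pow_one]
  have hval : W.D i * W.x i
      = W.basis ((Pi.single i 1, Pi.single i 1) : WMon n) + W.basis 0 := by
    rw [W.hDx i i, if_pos rfl, W.basis_eq, W.basis_eq, hwm, wm_zero]
  have hu0 : ((Pi.single i 1, Pi.single i 1) : WMon n) ≠ 0 := by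
    intro hc
    have h2 := congrFun (congrArg Prod.fst hc) i
    simp at h2
  have h0 : W.basis.repr (W.D i * W.x i) 0 = 1 := by
    rw [hval, map_add, W.basis.repr_self, W.basis.repr_self]
    rw [Finsupp.add_apply, Finsupp.single_apply, Finsupp.single_apply,
      if_neg hu0, if_pos rfl, zero_add]
  have hne : W.D i * W.x i ≠ 0 := by
    intro hc
    rw [hc] at h0
    simp at h0
  have hmem : (0 : WMon n) ∈ ND W (W.D i * W.x i) :=
    Finsupp.mem_support_iff.2 (by rw [h0]; exact one_ne_zero)
  have hle : δ (wmono W.x W.D (0 : WMon n)) ≤ δ (W.D i * W.x i) := by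
    rw [hsup _ hne]
    exact Finset.le_sup (f := fun ab => δ (wmono W.x W.D ab)) hmem
  rw [wm_zero, δ_one h, h.mul, add_comm] at hle
  exact hle

lemma diag_nonneg (hadm : IsAdmissible W δ) (γ : Fin n → ℕ) :
    0 ≤ δ (wmono W.x W.D ((γ, γ) : WMon n)) := by
  rw [δ_wm W hadm.1]
  show (0 : WithBot ℤ) ≤ (∑ i, γ i • δ (W.x i)) + ∑ i, γ i • δ (W.D i)
  rw [← Finset.sum_add_distrib]
  apply Finset.sum_nonneg
  intro i _
  rw [← smul_add]
  exact nsmul_nonneg (gen_nonneg W hadm i) _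

lemma r_pos {σ : Type*} [AddCommMonoid σ] {r : σ → σ → Prop}
    (hr : WellMonomialOrdering r) {w : σ} (hw : w ≠ 0) : r 0 w := by
  obtain ⟨hirr, htr, htot, hadd, hwf⟩ := hr
  have key : ∀ a, ¬ r (a + w) a := fun a =>
    hwf.induction (C := fun a => ¬ r (a + w) a) a
      (fun a ihh hcon => ihh (a + w) hcon (hadd _ _ w hcon))
  rcases htot 0 w (fun hc => hw hc.symm) with h | h
  · exact h
  · exact absurd (by rw [zero_add]; exact h : r (0 + w) 0) (key 0)

variable {r : WMon n → WMon n → Prop}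

lemma s_irrefl (hr : WellMonomialOrdering r) (a : WMon n) : ¬ rdelta W δ r a a := by
  rintro (h | ⟨-, h⟩)
  · exact lt_irrefl _ h
  · exact hr.1 a h

lemma s_trans (hr : WellMonomialOrdering r) {a b c : WMon n}
    (h1 : rdelta W δ r a b) (h2 : rdelta W δ r b c) : rdelta W δ r a c := by
  rcases h1 with h1 | ⟨h1e, h1r⟩ <;> rcases h2 with h2 | ⟨h2e, h2r⟩
  · exact Or.inl (h1.trans h2)
  · exact Or.inl (h2e ▸ h1)
  · exact Or.inl (h1e ▸ h2)
  · exact Or.inr ⟨h1e.trans h2e, hr.2.1 _ _ _ h1r h2r⟩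

lemma s_add (h : IsOrderFunction K δ) (hr : WellMonomialOrdering r) {a b : WMon n}
    (c : WMon n) (hab : rdelta W δ r a b) : rdelta W δ r (a + c) (b + c) := by
  rcases hab with hlt | ⟨heq, hrab⟩
  · exact Or.inl (by
      rw [δ_wm_add W h, δ_wm_add W h]
      exact WithBot.add_lt_add_right (δ_wm_ne_bot W h c) hlt)
  · exact Or.inr ⟨by rw [δ_wm_add W h, δ_wm_add W h, heq], hr.2.2.2.1 _ _ _ hrab⟩

lemma s_add_left (h : IsOrderFunction K δ) (hr : WellMonomialOrdering r) {a b : WMon n}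
    (c : WMon n) (hab : rdelta W δ r a b) : rdelta W δ r (c + a) (c + b) := by
  rw [add_comm c a, add_comm c b]
  exact s_add W h hr c hab

lemma s_diag (hadm : IsAdmissible W δ) (hr : WellMonomialOrdering r)
    {γ : Fin n → ℕ} (hγ : γ ≠ 0) (g : WMon n) : rdelta W δ r g (g + (γ, γ)) := by
  have hd := diag_nonneg W hadm γ
  have hadd := δ_wm_add W hadm.1 g ((γ, γ) : WMon n)
  rcases hd.lt_or_eq with hlt | heq0
  · refine Or.inl ?_
    rw [hadd]
    calc δ (wmono W.x W.D g) = δ (wmono W.x W.D g) + 0 := (add_zero _).symm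
      _ < δ (wmono W.x W.D g) + δ (wmono W.x W.D ((γ, γ) : WMon n)) :=
        WithBot.add_lt_add_left (δ_wm_ne_bot W hadm.1 g) hlt
  · refine Or.inr ⟨by rw [hadd, ← heq0, add_zero], ?_⟩
    have hp : ((γ, γ) : WMon n) ≠ 0 := fun hc => hγ (congrArg Prod.fst hc)
    have h2 := hr.2.2.2.1 0 ((γ, γ) : WMon n) g (r_pos hr hp)
    rwa [zero_add, add_comm] at h2

lemma repr_span {S : Set (WMon n)} {y : A}
    (hy : y ∈ Submodule.span K {z | ∃ g ∈ S, z = wmono W.x W.D g}) :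
    ∀ g', W.basis.repr y g' ≠ 0 → g' ∈ S := by
  induction hy using Submodule.span_induction with
  | mem z hz =>
      obtain ⟨g, hg, rfl⟩ := hz
      intro g' hg'
      rw [← W.basis_eq, W.basis.repr_self, Finsupp.single_apply] at hg'
      by_cases hgg : g = g'
      · exact hgg ▸ hg
      · rw [if_neg hgg] at hg'
        exact absurd rfl hg'
  | zero => intro g' h; simp at h
  | add u v hu hv ihu ihv =>
      intro g' h
      rw [map_add, Finsupp.add_apply] at h
      by_cases hu0 : W.basis.repr u g' = 0
      · exact ihv _ (by rwa [hu0, zero_add] at h)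
      · exact ihu _ hu0
  | smul c u hu ihu =>
      intro g' h
      rw [map_smul, Finsupp.smul_apply, smul_eq_mul] at h
      exact ihu _ (right_ne_zero_of_mul h)

end OrderLemmas

end ExpMul

/-- `exp_δ(PQ) = exp_δ(P) + exp_δ(Q)` for nonzero `P, Q`. -/
theorem exp_mul (K : Type*) [Field K] (n : ℕ) (A : Type*) [Ring A] [Algebra K A]
    (W : WeylData K n A) (δ : A → WithBot ℤ) (hδ : IsAdmissible W δ)
    (r : WMon n → WMon n → Prop) (hr : WellMonomialOrdering r)
    (P Q : A) (hP : P ≠ 0) (hQ : Q ≠ 0) (e f : WMon n)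
    (he : IsExp W (rdelta W δ r) P e) (hf : IsExp W (rdelta W δ r) Q f) :
    IsExp W (rdelta W δ r) (P * Q) (e + f) := by
  classical
  have hof : IsOrderFunction K δ := hδ.1
  have step1 : ∀ a ∈ ND W P, ∀ b ∈ ND W Q, (a, b) ≠ (e, f) →
      rdelta W δ r (a + b) (e + f) := by
    intro a ha b hb hne
    by_cases hae : a = e
    · subst hae
      have hbf : b ≠ f := fun hbf => hne (by rw [hbf])
      exact ExpMul.s_add_left W hof hr a (hf.2 b hb hbf)
    · have h1 : rdelta W δ r (a + b) (e + b) := ExpMul.s_add W hof hr b (he.2 a ha hae)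
      by_cases hbf : b = f
      · subst hbf; exact h1
      · exact ExpMul.s_trans W hr h1 (ExpMul.s_add_left W hof hr e (hf.2 b hb hbf))
  set S : Set (WMon n) := {g | rdelta W δ r g (e + f)} with hS
  set M : Submodule K A := Submodule.span K {z | ∃ g ∈ S, z = wmono W.x W.D g} with hM
  have hLoM : ∀ a ∈ ND W P, ∀ b ∈ ND W Q, ExpMul.Lo W (a + b) ≤ M := by
    intro a ha b hb
    apply Submodule.span_le.2
    rintro z ⟨g, γ, hγ, hgc, rfl⟩
    apply Submodule.subset_span
    refine ⟨g, ?_, rfl⟩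
    have hgab : rdelta W δ r g (a + b) := by
      have h2 := ExpMul.s_diag W hδ hr hγ g
      rwa [hgc] at h2
    by_cases hab : (a, b) = (e, f)
    · rw [Prod.mk.injEq] at hab
      obtain ⟨rfl, rfl⟩ := hab
      exact hgab
    · exact ExpMul.s_trans W hr hgab (step1 a ha b hb hab)
  have hPsum : P = ∑ a ∈ ND W P, W.basis.repr P a • wmono W.x W.D a := by
    conv_lhs => rw [← W.basis.linearCombination_repr P]
    rw [Finsupp.linearCombination_apply]
    exact Finset.sum_congr rfl fun a _ => by simp only [W.basis_eq]
  have hQsum : Q = ∑ b ∈ ND W Q, W.basis.repr Q b • wmono W.x W.D b := by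
    conv_lhs => rw [← W.basis.linearCombination_repr Q]
    rw [Finsupp.linearCombination_apply]
    exact Finset.sum_congr rfl fun a _ => by simp only [W.basis_eq]
  have hPQ : P * Q = ∑ a ∈ ND W P, ∑ b ∈ ND W Q,
      (W.basis.repr P a * W.basis.repr Q b) • (wmono W.x W.D a * wmono W.x W.D b) := by
    conv_lhs => rw [hPsum, hQsum]
    rw [Finset.sum_mul_sum]
    exact Finset.sum_congr rfl fun a _ =>
      Finset.sum_congr rfl fun b _ => smul_mul_smul_comm _ _ _ _
  set T : A := ∑ p ∈ (ND W P) ×ˢ (ND W Q),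
      (W.basis.repr P p.1 * W.basis.repr Q p.2) • wmono W.x W.D (p.1 + p.2) with hT
  have hPQT : P * Q - T ∈ M := by
    rw [hPQ, hT, Finset.sum_product, ← Finset.sum_sub_distrib]
    apply Submodule.sum_mem
    intro a ha
    rw [← Finset.sum_sub_distrib]
    apply Submodule.sum_mem
    intro b hb
    rw [← smul_sub]
    exact Submodule.smul_mem _ _ (hLoM a ha b hb (ExpMul.mul_key W a b))
  have hefmem : ((e, f) : WMon n × WMon n) ∈ (ND W P) ×ˢ (ND W Q) :=
    Finset.mem_product.2 ⟨he.1, hf.1⟩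
  set c0 : K := W.basis.repr P e * W.basis.repr Q f with hc0
  set rest : A := ∑ p ∈ ((ND W P) ×ˢ (ND W Q)).erase (e, f),
      (W.basis.repr P p.1 * W.basis.repr Q p.2) • wmono W.x W.D (p.1 + p.2) with hrest
  have hTsplit : T = c0 • wmono W.x W.D (e + f) + rest := by
    rw [hT, ← Finset.add_sum_erase _ _ hefmem]
  have hrestM : rest ∈ M := by
    apply Submodule.sum_mem
    intro p hp
    obtain ⟨hpne, hpmem⟩ := Finset.mem_erase.1 hp
    obtain ⟨hp1, hp2⟩ := Finset.mem_product.1 hpmem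
    exact Submodule.smul_mem _ _
      (Submodule.subset_span ⟨p.1 + p.2, step1 _ hp1 _ hp2 hpne, rfl⟩)
  have hRM : (P * Q - T) + rest ∈ M := add_mem hPQT hrestM
  have hdecomp : P * Q = c0 • wmono W.x W.D (e + f) + ((P * Q - T) + rest) := by
    rw [hTsplit]; abel
  have hrepr : ∀ g, W.basis.repr (P * Q) g
      = c0 * (Finsupp.single (e + f) (1 : K)) g
        + W.basis.repr ((P * Q - T) + rest) g := by
    intro g
    conv_lhs => rw [hdecomp]
    rw [map_add, Finsupp.add_apply, map_smul, Finsupp.smul_apply, smul_eq_mul,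
      ← W.basis_eq, W.basis.repr_self]
  have hRrepr : ∀ g, W.basis.repr ((P * Q - T) + rest) g ≠ 0 → rdelta W δ r g (e + f) :=
    fun g hg => ExpMul.repr_span W hRM g hg
  have hc0ne : c0 ≠ 0 :=
    mul_ne_zero (Finsupp.mem_support_iff.1 he.1) (Finsupp.mem_support_iff.1 hf.1)
  constructor
  · apply Finsupp.mem_support_iff.2
    rw [hrepr (e + f)]
    have hz : W.basis.repr ((P * Q - T) + rest) (e + f) = 0 := by
      by_contra hcon
      exact ExpMul.s_irrefl W hr (e + f) (hRrepr _ hcon)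
    rw [hz, Finsupp.single_eq_same, mul_one, add_zero]
    exact hc0ne
  · intro g hg hne
    have h1 := Finsupp.mem_support_iff.1 hg
    rw [hrepr g, Finsupp.single_apply, if_neg (fun hh => hne hh.symm), mul_zero,
      zero_add] at h1
    exact hRrepr g h1
end

section
/- Let I be a nonzero left ideal of A_n(K) and let P_1,...,P_r ∈ I be a δ-standard basis of I, i.e., Exp_δ(I) = ∪_{i=1}^r (exp_δ(P_i) + ℕ^{2n}). Then the principal symbols σ_δ(P_1),...,σ_δ(P_r) generate the graded ideal gr_δ(I) in gr_δ(A_n(K)). -/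
namespace SBaux

/-- ordered product of powers -/
def pw {A : Type*} [Monoid A] {m : ℕ} (f : Fin m → A) (a : Fin m → ℕ) : A :=
  (List.ofFn fun i => f i ^ a i).prod

theorem pw_zero {A : Type*} [Monoid A] {m : ℕ} (f : Fin m → A) : pw f 0 = 1 := by
  simp [pw]

theorem pw_succ {A : Type*} [Monoid A] {m : ℕ} (f : Fin (m+1) → A) (a : Fin (m+1) → ℕ) :
    pw f a = f 0 ^ a 0 * pw (f ∘ Fin.succ) (a ∘ Fin.succ) := by
  simp [pw, List.ofFn_succ, Function.comp]

theorem commute_pw {A : Type*} [Monoid A] {m : ℕ} {c : A} {f : Fin m → A}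
    (h : ∀ i, Commute c (f i)) (a : Fin m → ℕ) : Commute c (pw f a) := by
  apply Commute.list_prod_right
  intro x hx
  rw [List.mem_ofFn] at hx
  obtain ⟨i, rfl⟩ := hx
  exact (h i).pow_right _

theorem pw_add {A : Type*} [Monoid A] {m : ℕ} (f : Fin m → A)
    (hf : ∀ i j, Commute (f i) (f j)) (a b : Fin m → ℕ) :
    pw f (a + b) = pw f a * pw f b := by
  induction m with
  | zero => simp [pw]
  | succ m IH =>
    rw [pw_succ, pw_succ f a, pw_succ f b]
    have h1 : pw (f ∘ Fin.succ) ((a + b) ∘ Fin.succ)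
        = pw (f ∘ Fin.succ) (a ∘ Fin.succ) * pw (f ∘ Fin.succ) (b ∘ Fin.succ) := by
      rw [← IH (f ∘ Fin.succ) (fun i j => hf _ _)]
      rfl
    have h2 : Commute (f 0 ^ b 0) (pw (f ∘ Fin.succ) (a ∘ Fin.succ)) :=
      commute_pw (fun i => ((hf 0 i.succ).pow_left _)) _
    have : (a + b) 0 = a 0 + b 0 := rfl
    rw [h1, this, pow_add]
    rw [mul_assoc, mul_assoc, ← mul_assoc (f 0 ^ b 0), h2.eq, mul_assoc]

theorem pw_single {A : Type*} [Monoid A] {m : ℕ} (f : Fin m → A) (i : Fin m) :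
    pw f (Pi.single i 1) = f i := by
  induction m with
  | zero => exact absurd i.2 (by simp)
  | succ m IH =>
    rw [pw_succ]
    rcases Fin.eq_zero_or_eq_succ i with rfl | ⟨j, rfl⟩
    · have h1 : (Pi.single (0 : Fin (m+1)) 1 : Fin (m+1) → ℕ) ∘ Fin.succ = 0 := by
        funext k; simp [Function.comp, Pi.single_eq_of_ne (Fin.succ_ne_zero k)]
      rw [h1, pw_zero, Pi.single_eq_same, pow_one, mul_one]
    · have h1 : (Pi.single (j.succ) 1 : Fin (m+1) → ℕ) ∘ Fin.succ = Pi.single j 1 := by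
        funext k
        by_cases hk : k = j
        · subst hk; simp
        · simp [Function.comp, Pi.single_eq_of_ne (fun h => hk (Fin.succ_injective _ h)),
            Pi.single_eq_of_ne hk]
      have h2 : (Pi.single (j.succ) 1 : Fin (m+1) → ℕ) 0 = 0 :=
        Pi.single_eq_of_ne (Fin.succ_ne_zero j).symm _
      rw [h1, h2, pow_zero, one_mul]; exact IH _ j

theorem pw_peel {A : Type*} [Monoid A] {m : ℕ} (f : Fin m → A)
    (hf : ∀ i j, Commute (f i) (f j)) (i : Fin m) (a : Fin m → ℕ) :
    pw f (Pi.single i 1 + a) = f i * pw f a := by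
  rw [pw_add f hf, pw_single]

/-- peel one unit off a nonzero multi-index -/
theorem exists_peel {m : ℕ} (a : Fin m → ℕ) (ha : a ≠ 0) :
    ∃ (i : Fin m) (a' : Fin m → ℕ), a = Pi.single i 1 + a' ∧ (∑ k, a' k) + 1 = ∑ k, a k := by
  have : ∃ i, a i ≠ 0 := by
    by_contra h; push_neg at h; exact ha (funext fun i => h i)
  obtain ⟨i, hi⟩ := this
  refine ⟨i, a - Pi.single i 1, ?_, ?_⟩
  · funext k
    by_cases hk : k = i
    · subst hk; simp; omega
    · simp [Pi.single_eq_of_ne hk]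
  · have h1 : a = Pi.single i 1 + (a - Pi.single i 1) := by
      funext k
      by_cases hk : k = i
      · subst hk; simp; omega
      · simp [Pi.single_eq_of_ne hk]
    conv_rhs => rw [h1]
    simp only [Pi.add_apply]
    rw [Finset.sum_add_distrib, Finset.sum_pi_single']
    simp [add_comm]

end SBaux

namespace SBaux2
open SBaux

theorem span_mul_mem {K A : Type*} [Field K] [Ring A] [Algebra K A] (c d : A)
    {S T : Set A} (h : ∀ w ∈ S, c * w * d ∈ Submodule.span K T) {L : A}
    (hL : L ∈ Submodule.span K S) : c * L * d ∈ Submodule.span K T := by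
  induction hL using Submodule.span_induction with
  | mem w hw => exact h w hw
  | zero => simp
  | add u v _ _ hu hv => simpa [mul_add, add_mul] using Submodule.add_mem _ hu hv
  | smul k u _ hu =>
    have he : c * (k • u) * d = k • (c * u * d) := by
      rw [mul_smul_comm, smul_mul_assoc]
    rw [he]; exact Submodule.smul_mem _ _ hu

theorem span_mul_left_mem {K A : Type*} [Field K] [Ring A] [Algebra K A] (c : A)
    {S T : Set A} (h : ∀ w ∈ S, c * w ∈ Submodule.span K T) {L : A}
    (hL : L ∈ Submodule.span K S) : c * L ∈ Submodule.span K T := by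
  have := span_mul_mem c 1 (S := S) (T := T) (by simpa using h) hL
  simpa using this

theorem span_mul_right_mem {K A : Type*} [Field K] [Ring A] [Algebra K A] (d : A)
    {S T : Set A} (h : ∀ w ∈ S, w * d ∈ Submodule.span K T) {L : A}
    (hL : L ∈ Submodule.span K S) : L * d ∈ Submodule.span K T := by
  have := span_mul_mem 1 d (S := S) (T := T) (by simpa using h) hL
  simpa using this

end SBaux2

namespace SBaux3
open SBaux SBaux2

variable {K : Type*} [Field K] {n : ℕ} {A : Type*} [Ring A] [Algebra K A]

theorem wmono_eq (x D : Fin n → A) (ab : WMon n) :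
    wmono x D ab = pw x ab.1 * pw D ab.2 := rfl

variable (W : WeylData K n A)

/-- correction set for commuting `D i` past `x^a` -/
def dxSet (i : Fin n) (a : Fin n → ℕ) : Set A :=
  {w | ∃ v : Fin n → ℕ, v + Pi.single i 1 = a ∧ w = pw W.x v}

theorem Dx_comm (i : Fin n) (a : Fin n → ℕ) :
    W.D i * pw W.x a - pw W.x a * W.D i ∈ Submodule.span K (dxSet W i a) := by
  generalize hN : (∑ k, a k) = N
  induction N using Nat.strong_induction_on generalizing a with
  | _ N IH =>
  by_cases ha : a = 0
  · subst ha; rw [pw_zero]; simp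
  · obtain ⟨j, a', rfl, hsum⟩ := exists_peel a ha
    have hxc : ∀ k l, Commute (W.x k) (W.x l) := fun k l => W.hxx k l
    rw [pw_peel W.x hxc j]
    have hL : W.D i * pw W.x a' - pw W.x a' * W.D i ∈ Submodule.span K (dxSet W i a') :=
      IH (∑ k, a' k) (by omega) a' rfl
    set L := W.D i * pw W.x a' - pw W.x a' * W.D i with hLdef
    have key : W.D i * (W.x j * pw W.x a') - (W.x j * pw W.x a') * W.D i
        = W.x j * L + (if i = j then 1 else 0) * pw W.x a' := by
      have h1 : W.D i * W.x j = W.x j * W.D i + (if i = j then 1 else 0) := W.hDx i j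
      rw [hLdef, ← mul_assoc, h1]
      noncomm_ring
    rw [key]
    apply Submodule.add_mem
    · apply span_mul_left_mem (W.x j) (S := dxSet W i a') _ hL
      rintro w ⟨v, hv, rfl⟩
      apply Submodule.subset_span
      exact ⟨Pi.single j 1 + v, by rw [add_assoc, hv], (pw_peel W.x hxc j v).symm⟩
    · by_cases hij : i = j
      · subst hij
        rw [if_pos rfl, one_mul]
        exact Submodule.subset_span ⟨a', by rw [add_comm], rfl⟩
      · rw [if_neg hij, zero_mul]; exact Submodule.zero_mem _

/-- correction set for commuting `D^c` past `x^a` -/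
def lowPW (a c : Fin n → ℕ) : Set A :=
  {w | ∃ μ : Fin n → ℕ, μ ≠ 0 ∧ ∃ v w2 : Fin n → ℕ, v + μ = a ∧ w2 + μ = c ∧
    w = pw W.x v * pw W.D w2}

theorem pwD_comm (c a : Fin n → ℕ) :
    pw W.D c * pw W.x a - pw W.x a * pw W.D c ∈ Submodule.span K (lowPW W a c) := by
  generalize hN : (∑ k, c k) = N
  induction N using Nat.strong_induction_on generalizing c with
  | _ N IH =>
  by_cases hc : c = 0
  · subst hc; rw [pw_zero]; simp
  · obtain ⟨i, c', rfl, hsum⟩ := exists_peel c hc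
    have hDc : ∀ k l, Commute (W.D k) (W.D l) := fun k l => W.hDD k l
    rw [pw_peel W.D hDc i]
    have hL1 : pw W.D c' * pw W.x a - pw W.x a * pw W.D c' ∈ Submodule.span K (lowPW W a c') :=
      IH (∑ k, c' k) (by omega) c' rfl
    set L1 := pw W.D c' * pw W.x a - pw W.x a * pw W.D c' with hL1def
    have hL2 := Dx_comm W i a
    set L2 := W.D i * pw W.x a - pw W.x a * W.D i with hL2def
    have key : (W.D i * pw W.D c') * pw W.x a - pw W.x a * (W.D i * pw W.D c')
        = L2 * pw W.D c' + W.D i * L1 := by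
      rw [hL1def, hL2def]; noncomm_ring
    rw [key]
    apply Submodule.add_mem
    · -- L2 * pw D c'
      apply span_mul_right_mem (pw W.D c') (S := dxSet W i a) _ hL2
      rintro w ⟨v, hv, rfl⟩
      apply Submodule.subset_span
      refine ⟨Pi.single i 1, ?_, v, c', hv, add_comm _ _, rfl⟩
      intro h0
      have := congrFun h0 i
      simp at this
    · -- D i * L1
      apply span_mul_left_mem (W.D i) (S := lowPW W a c') _ hL1
      rintro w ⟨μ, hμ, v, w2, hva, hwc, rfl⟩
      have hL3 := Dx_comm W i v
      set L3 := W.D i * pw W.x v - pw W.x v * W.D i with hL3def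
      have key2 : W.D i * (pw W.x v * pw W.D w2)
          = pw W.x v * pw W.D (Pi.single i 1 + w2) + L3 * pw W.D w2 := by
        rw [pw_peel W.D hDc i w2, hL3def]; noncomm_ring
      rw [key2]
      apply Submodule.add_mem
      · exact Submodule.subset_span ⟨μ, hμ, v, Pi.single i 1 + w2, hva,
          by rw [← hwc]; abel, rfl⟩
      · apply span_mul_right_mem (pw W.D w2) (S := dxSet W i v) _ hL3
        rintro w ⟨v', hv', rfl⟩
        apply Submodule.subset_span
        refine ⟨μ + Pi.single i 1, ?_, v', w2, ?_, ?_, rfl⟩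
        · intro h0
          have := congrFun h0 i
          simp at this
        · rw [← hva, ← hv']; abel
        · rw [← hwc]; abel

/-- lower-order monomial set below `e` -/
def lowSet (e : WMon n) : Set A :=
  {w | ∃ μ : Fin n → ℕ, μ ≠ 0 ∧ ∃ v : WMon n, v + (μ, μ) = e ∧ w = wmono W.x W.D v}

theorem mul_lower (a b : WMon n) :
    wmono W.x W.D a * wmono W.x W.D b - wmono W.x W.D (a + b)
      ∈ Submodule.span K (lowSet W (a + b)) := by
  have hxc : ∀ k l, Commute (W.x k) (W.x l) := fun k l => W.hxx k l
  have hDc : ∀ k l, Commute (W.D k) (W.D l) := fun k l => W.hDD k l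
  have hL := pwD_comm W a.2 b.1
  set L := pw W.D a.2 * pw W.x b.1 - pw W.x b.1 * pw W.D a.2 with hLdef
  have key : wmono W.x W.D a * wmono W.x W.D b - wmono W.x W.D (a + b)
      = pw W.x a.1 * L * pw W.D b.2 := by
    rw [wmono_eq, wmono_eq, wmono_eq, hLdef]
    have e1 : (a + b).1 = a.1 + b.1 := rfl
    have e2 : (a + b).2 = a.2 + b.2 := rfl
    rw [e1, e2, pw_add W.x hxc, pw_add W.D hDc]
    noncomm_ring
  rw [key]
  apply span_mul_mem (pw W.x a.1) (pw W.D b.2) (S := lowPW W b.1 a.2) _ hL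
  rintro w ⟨μ, hμ, v, w2, hv, hw, rfl⟩
  apply Submodule.subset_span
  refine ⟨μ, hμ, (a.1 + v, w2 + b.2), ?_, ?_⟩
  · have e1 : a.1 + v + μ = a.1 + b.1 := by rw [← hv]; abel
    have e2 : w2 + b.2 + μ = a.2 + b.2 := by rw [← hw]; abel
    exact Prod.ext e1 e2
  · show pw W.x a.1 * (pw W.x v * pw W.D w2) * pw W.D b.2 = pw W.x (a.1+v) * pw W.D (w2+b.2)
    rw [pw_add W.x hxc, pw_add W.D hDc, mul_assoc, mul_assoc, mul_assoc]

theorem wmono_ne_zero (ab : WMon n) : wmono W.x W.D ab ≠ 0 := by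
  rw [← W.basis_eq]; exact W.basis.ne_zero ab

variable {δ : A → WithBot ℤ} (hδ : IsAdmissible W δ)
include hδ

theorem δ_one : δ 1 = 0 := by
  have := hδ.1.scalar 1 one_ne_zero
  rwa [map_one] at this

theorem δ_mono_ne_bot (ab : WMon n) : δ (wmono W.x W.D ab) ≠ ⊥ := by
  simp only [ne_eq, hδ.1.bot_iff]; exact wmono_ne_zero W ab

theorem δ_mono_add (a b : WMon n) :
    δ (wmono W.x W.D (a + b)) = δ (wmono W.x W.D a) + δ (wmono W.x W.D b) := by
  have hxc : ∀ k l, Commute (W.x k) (W.x l) := fun k l => W.hxx k l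
  have hDc : ∀ k l, Commute (W.D k) (W.D l) := fun k l => W.hDD k l
  have e1 : (a + b).1 = a.1 + b.1 := rfl
  have e2 : (a + b).2 = a.2 + b.2 := rfl
  rw [wmono_eq, wmono_eq, wmono_eq, e1, e2, pw_add W.x hxc, pw_add W.D hDc]
  rw [hδ.1.mul, hδ.1.mul, hδ.1.mul, hδ.1.mul, hδ.1.mul]
  abel

theorem δ_mono_zero : δ (wmono W.x W.D 0) = 0 := by
  have : wmono W.x W.D 0 = 1 := by
    rw [wmono_eq]
    show pw W.x 0 * pw W.D 0 = 1
    rw [pw_zero, pw_zero, one_mul]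
  rw [this, δ_one W hδ]

theorem δ_xD_nonneg (i : Fin n) :
    (0 : WithBot ℤ) ≤ δ (wmono W.x W.D (Pi.single i 1, Pi.single i 1)) := by
  have hxD : wmono W.x W.D (Pi.single i 1, Pi.single i 1) = W.x i * W.D i := by
    rw [wmono_eq]
    show pw W.x (Pi.single i 1) * pw W.D (Pi.single i 1) = W.x i * W.D i
    rw [pw_single, pw_single]
  rw [hxD]
  set s : WMon n := (Pi.single i 1, Pi.single i 1) with hs
  have hsne : s ≠ (0 : WMon n) := by
    intro h
    have := congrFun (congrArg Prod.fst h) i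
    simp [hs] at this
  set P := W.x i * W.D i + 1 with hP
  have hb0 : wmono W.x W.D (0 : WMon n) = 1 := by
    rw [wmono_eq]
    show pw W.x 0 * pw W.D 0 = 1
    rw [pw_zero, pw_zero, one_mul]
  have hPb : P = W.basis s + W.basis (0 : WMon n) := by
    rw [W.basis_eq, W.basis_eq, hxD, hb0, hP]
  have hrepr : W.basis.repr P = Finsupp.single s 1 + Finsupp.single (0 : WMon n) 1 := by
    rw [hPb, map_add, W.basis.repr_self, W.basis.repr_self]
  have hP0 : P ≠ 0 := by
    intro h
    have : W.basis.repr P s = 0 := by rw [h, map_zero]; rfl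
    rw [hrepr] at this
    simp [Finsupp.single_eq_same, Finsupp.single_eq_of_ne hsne] at this
  have hND : ND W P = {s, (0 : WMon n)} := by
    rw [ND, hrepr, Finsupp.support_add_eq]
    · rw [Finsupp.support_single_ne_zero _ one_ne_zero,
        Finsupp.support_single_ne_zero _ one_ne_zero]
      rfl
    · rw [Finsupp.support_single_ne_zero _ one_ne_zero,
        Finsupp.support_single_ne_zero _ one_ne_zero]
      exact Finset.disjoint_singleton.mpr hsne
  have hδP : δ P = max (δ (wmono W.x W.D s)) 0 := by
    rw [hδ.2 P hP0, hND]
    rw [Finset.sup_insert, Finset.sup_singleton, δ_mono_zero W hδ]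
  have hDx : W.D i * W.x i = P := by
    rw [hP, W.hDx i i, if_pos rfl]
  have hδP' : δ P = δ (W.x i * W.D i) := by
    rw [← hDx, hδ.1.mul, hδ.1.mul, add_comm]
  rw [hxD] at hδP
  rw [hδP'] at hδP
  calc (0 : WithBot ℤ) ≤ max (δ (W.x i * W.D i)) 0 := le_max_right _ _
    _ = δ (W.x i * W.D i) := hδP.symm

theorem δ_diag_nonneg (μ : Fin n → ℕ) :
    (0 : WithBot ℤ) ≤ δ (wmono W.x W.D (μ, μ)) := by
  generalize hN : (∑ k, μ k) = N
  induction N using Nat.strong_induction_on generalizing μ with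
  | _ N IH =>
  by_cases hμ : μ = 0
  · subst hμ
    rw [show ((0 : Fin n → ℕ), (0 : Fin n → ℕ)) = (0 : WMon n) from rfl, δ_mono_zero W hδ]
  · obtain ⟨i, μ', rfl, hsum⟩ := exists_peel μ hμ
    have hpair : ((Pi.single i 1 + μ' : Fin n → ℕ), (Pi.single i 1 + μ' : Fin n → ℕ))
        = ((Pi.single i 1, Pi.single i 1) : WMon n) + (μ', μ') := rfl
    rw [hpair, δ_mono_add W hδ]
    exact add_nonneg (δ_xD_nonneg W hδ i) (IH (∑ k, μ' k) (by omega) μ' rfl)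

omit hδ in
theorem r_add_self {σ : Type*} [AddCancelCommMonoid σ] {r : σ → σ → Prop}
    (hr : WellMonomialOrdering r) {c : σ} (hc : c ≠ 0) (a : σ) : r a (a + c) := by
  by_contra h
  have hne : a + c ≠ a := by
    intro he
    exact hc (by simpa using he)
  have h2 : r (a + c) a := (hr.2.2.1 _ _ hne).resolve_right h
  obtain ⟨m, hm, hmin⟩ := hr.2.2.2.2.has_min (Set.range fun k : ℕ => a + k • c)
    ⟨a + (0 : ℕ) • c, ⟨0, rfl⟩⟩
  obtain ⟨k, rfl⟩ := hm
  apply hmin (a + (k + 1) • c) ⟨k + 1, rfl⟩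
  have h3 := hr.2.2.2.1 (a + c) a (k • c) h2
  have e1 : a + (k + 1) • c = a + c + k • c := by rw [add_nsmul, one_nsmul]; abel
  have e2 : a + k • c = a + k • c := rfl
  rw [e1]
  exact h3

omit W hδ in
theorem finset_exists_max {α : Type*} {t : α → α → Prop}
    (htr : ∀ a b c, t a b → t b c → t a c) (htot : ∀ a b, a ≠ b → t a b ∨ t b a)
    (s : Finset α) (hs : s.Nonempty) : ∃ e ∈ s, ∀ f ∈ s, f ≠ e → t f e := by
  classical
  induction s using Finset.induction_on with
  | empty => obtain ⟨w, hw⟩ := hs; simp at hw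
  | @insert a s' ha IH =>
    by_cases hs' : s'.Nonempty
    · obtain ⟨e, he, hmax⟩ := IH hs'
      have hae : a ≠ e := fun h => ha (h ▸ he)
      rcases htot a e hae with h1 | h1
      · refine ⟨e, Finset.mem_insert_of_mem he, ?_⟩
        intro f hf hfe
        rcases Finset.mem_insert.mp hf with rfl | hf'
        · exact h1
        · exact hmax f hf' hfe
      · refine ⟨a, Finset.mem_insert_self _ _, ?_⟩
        intro f hf hfa
        rcases Finset.mem_insert.mp hf with rfl | hf'
        · exact absurd rfl hfa
        · by_cases hfe : f = e
          · subst hfe; exact h1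
          · exact htr _ _ _ (hmax f hf' hfe) h1
    · have : s' = ∅ := Finset.not_nonempty_iff_eq_empty.mp hs'
      subst this
      refine ⟨a, by simp, ?_⟩
      intro f hf hfa
      simp only [Finset.mem_insert, Finset.notMem_empty, or_false] at hf
      exact absurd hf hfa

variable {r : WMon n → WMon n → Prop} (hr : WellMonomialOrdering r)
include hr

omit hδ in
theorem rdelta_trans (a b c : WMon n) (h1 : rdelta W δ r a b) (h2 : rdelta W δ r b c) :
    rdelta W δ r a c := by
  rcases h1 with h1 | ⟨h1, h1'⟩ <;> rcases h2 with h2 | ⟨h2, h2'⟩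
  · exact Or.inl (lt_trans h1 h2)
  · exact Or.inl (lt_of_lt_of_eq h1 h2)
  · exact Or.inl (lt_of_eq_of_lt h1 h2)
  · exact Or.inr ⟨h1.trans h2, hr.2.1 _ _ _ h1' h2'⟩

omit hδ in
theorem rdelta_total (a b : WMon n) (hab : a ≠ b) : rdelta W δ r a b ∨ rdelta W δ r b a := by
  rcases lt_trichotomy (δ (wmono W.x W.D a)) (δ (wmono W.x W.D b)) with h | h | h
  · exact Or.inl (Or.inl h)
  · rcases hr.2.2.1 a b hab with h' | h'
    · exact Or.inl (Or.inr ⟨h, h'⟩)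
    · exact Or.inr (Or.inr ⟨h.symm, h'⟩)
  · exact Or.inr (Or.inl h)

omit hδ in
theorem rdelta_irrefl (a : WMon n) : ¬ rdelta W δ r a a := by
  rintro (h | ⟨-, h⟩)
  · exact lt_irrefl _ h
  · exact hr.1 a h

theorem rdelta_translate (a b c : WMon n) (h : rdelta W δ r a b) :
    rdelta W δ r (a + c) (b + c) := by
  rcases h with h | ⟨h, h'⟩
  · left
    rw [δ_mono_add W hδ, δ_mono_add W hδ]
    exact WithBot.add_lt_add_right (δ_mono_ne_bot W hδ c) h
  · right
    refine ⟨?_, hr.2.2.2.1 _ _ _ h'⟩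
    rw [δ_mono_add W hδ, δ_mono_add W hδ, h]

theorem rdelta_low (v : WMon n) {μ : Fin n → ℕ} (hμ : μ ≠ 0) :
    rdelta W δ r v (v + ((μ, μ) : WMon n)) := by
  have hle : δ (wmono W.x W.D v) ≤ δ (wmono W.x W.D (v + ((μ, μ) : WMon n))) := by
    rw [δ_mono_add W hδ]
    exact le_add_of_nonneg_right (δ_diag_nonneg W hδ μ)
  rcases lt_or_eq_of_le hle with h | h
  · exact Or.inl h
  · refine Or.inr ⟨h, r_add_self hr ?_ v⟩
    intro h0
    exact hμ (congrArg Prod.fst h0)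

omit hr in
theorem IsExp_delta {Q : A} (hQ : Q ≠ 0) {e : WMon n}
    (he : IsExp W (rdelta W δ r) Q e) : δ Q = δ (wmono W.x W.D e) := by
  rw [hδ.2 Q hQ]
  apply le_antisymm
  · apply Finset.sup_le
    intro f hf
    by_cases hfe : f = e
    · subst hfe; exact le_refl _
    · rcases he.2 f hf hfe with h | ⟨h, -⟩
      · exact le_of_lt h
      · exact le_of_eq h
  · exact Finset.le_sup (f := fun ab => δ (wmono W.x W.D ab)) he.1

omit hδ in
theorem exp_exists {Q : A} (hQ : Q ≠ 0) : ∃ e, IsExp W (rdelta W δ r) Q e := by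
  have hnd : (ND W Q).Nonempty := by
    rw [ND, Finsupp.support_nonempty_iff]
    intro h
    exact hQ (by simpa using (LinearEquiv.map_eq_zero_iff W.basis.repr).mp h)
  obtain ⟨e, he, hmax⟩ := finset_exists_max
    (rdelta_trans W hr) (rdelta_total W hr) (ND W Q) hnd
  exact ⟨e, he, hmax⟩

omit hδ hr in
theorem repr_sum (Q : A) :
    Q = ∑ ab ∈ ND W Q, (W.basis.repr Q ab) • wmono W.x W.D ab := by
  conv_lhs => rw [← W.basis.linearCombination_repr Q]
  rw [Finsupp.linearCombination_apply, Finsupp.sum]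
  exact Finset.sum_congr rfl fun ab _ => by rw [W.basis_eq]

theorem mul_exp_decomp {Q : A} (hQ : Q ≠ 0) {ep : WMon n}
    (hexp : IsExp W (rdelta W δ r) Q ep) (γ : WMon n) :
    ∃ S ∈ Submodule.span K
      (wmono W.x W.D '' {u : WMon n | rdelta W δ r u (γ + ep)}),
      wmono W.x W.D γ * Q
        = (W.basis.repr Q ep) • wmono W.x W.D (γ + ep) + S := by
  classical
  set U : Set (WMon n) := {u : WMon n | rdelta W δ r u (γ + ep)} with hU
  set M := Submodule.span K (wmono W.x W.D '' U) with hM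
  have hmemU : ∀ ab ∈ ND W Q, ∀ v : WMon n, (∃ μ : Fin n → ℕ, μ ≠ 0 ∧ v + (μ, μ) = γ + ab)
      → v ∈ U := by
    intro ab hab v ⟨μ, hμ, hv⟩
    have h1 : rdelta W δ r v (γ + ab) := hv ▸ rdelta_low W hδ hr v hμ
    by_cases habe : ab = ep
    · subst habe; exact h1
    · have h2 : rdelta W δ r ab ep := hexp.2 ab hab habe
      have h3 : rdelta W δ r (ab + γ) (ep + γ) := rdelta_translate W hδ hr _ _ γ h2
      rw [add_comm ab γ, add_comm ep γ] at h3
      exact rdelta_trans W hr _ _ _ h1 h3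
  have hlow : ∀ ab ∈ ND W Q,
      wmono W.x W.D γ * wmono W.x W.D ab - wmono W.x W.D (γ + ab) ∈ M := by
    intro ab hab
    refine Submodule.span_le.mpr ?_ (mul_lower W γ ab)
    rintro w ⟨μ, hμ, v, hv, rfl⟩
    exact Submodule.subset_span ⟨v, hmemU ab hab v ⟨μ, hμ, hv⟩, rfl⟩
  have hmid : ∀ ab ∈ ND W Q, ab ≠ ep → wmono W.x W.D (γ + ab) ∈ M := by
    intro ab hab habe
    apply Submodule.subset_span
    refine ⟨γ + ab, ?_, rfl⟩
    have h2 : rdelta W δ r ab ep := hexp.2 ab hab habe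
    have h3 : rdelta W δ r (ab + γ) (ep + γ) := rdelta_translate W hδ hr _ _ γ h2
    rw [add_comm ab γ, add_comm ep γ] at h3
    exact h3
  set S := (∑ ab ∈ (ND W Q).erase ep, (W.basis.repr Q ab) • wmono W.x W.D (γ + ab))
    + ∑ ab ∈ ND W Q, (W.basis.repr Q ab) •
        (wmono W.x W.D γ * wmono W.x W.D ab - wmono W.x W.D (γ + ab)) with hS
  refine ⟨S, ?_, ?_⟩
  · apply Submodule.add_mem
    · apply Submodule.sum_mem
      intro ab hab
      exact Submodule.smul_mem _ _
        (hmid ab (Finset.mem_of_mem_erase hab) (Finset.ne_of_mem_erase hab))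
    · exact Submodule.sum_mem _ fun ab hab => Submodule.smul_mem _ _ (hlow ab hab)
  · have h2 : wmono W.x W.D γ * Q
        = ∑ ab ∈ ND W Q, (W.basis.repr Q ab) • (wmono W.x W.D γ * wmono W.x W.D ab) := by
      conv_lhs => rw [repr_sum W Q]
      rw [Finset.mul_sum]
      exact Finset.sum_congr rfl fun ab _ => (mul_smul_comm _ _ _)
    have h1 : ∑ ab ∈ ND W Q, (W.basis.repr Q ab) • wmono W.x W.D (γ + ab)
        = (W.basis.repr Q ep) • wmono W.x W.D (γ + ep)
          + ∑ ab ∈ (ND W Q).erase ep, (W.basis.repr Q ab) • wmono W.x W.D (γ + ab) :=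
      (Finset.add_sum_erase _ _ hexp.1).symm
    rw [hS, h2, ← add_assoc, ← h1, ← Finset.sum_add_distrib]
    exact Finset.sum_congr rfl fun ab _ => by rw [smul_sub]; abel

end SBaux3

/-- if `P₁,…,P_r` is a `δ`-standard basis of a nonzero left ideal `I`,
then the principal symbols `σ(P₁),…,σ(P_r)` generate the graded (left) ideal `gr_δ(I)`
of the associated graded ring. -/
theorem standard_basis_generates_gr (K : Type*) [Field K] (n : ℕ) (A : Type*) [Ring A]
    [Algebra K A] (W : WeylData K n A) (δ : A → WithBot ℤ) (hδ : IsAdmissible W δ)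
    (r : WMon n → WMon n → Prop) (hr : WellMonomialOrdering r)
    -- data presenting the associated graded ring `gr_δ(A_n(K))` with symbol map `σ`:
    (gr : Type*) [Ring gr] [Algebra K gr] (grade : ℤ → Submodule K gr) (σ : A → gr)
    (hinternal : DirectSum.IsInternal grade)
    (hσ0 : σ 0 = 0)
    (hmem : ∀ (P : A) (k : ℤ), δ P = (k : WithBot ℤ) → σ P ∈ grade k)
    (hne : ∀ P : A, P ≠ 0 → σ P ≠ 0)
    (hsmul : ∀ (c : K) (P : A), σ (c • P) = c • σ P)
    (hmul : ∀ P Q : A, σ (P * Q) = σ P * σ Q)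
    (hadd : ∀ P Q : A, δ P = δ Q → δ (P + Q) = δ P → σ (P + Q) = σ P + σ Q)
    (htop : ∀ P Q : A, δ Q < δ P → σ (P + Q) = σ P)
    (hsurj : ∀ (k : ℤ) (g : gr), g ∈ grade k → g ≠ 0 →
      ∃ P : A, δ P = (k : WithBot ℤ) ∧ σ P = g)
    -- a `δ`-standard basis `P₁,…,P_r` of a nonzero left ideal `I`:
    (I : Ideal A) (hI : I ≠ ⊥) (m : ℕ) (P : Fin m → A)
    (hPI : ∀ i, P i ∈ I) (hPne : ∀ i, P i ≠ 0) (e : Fin m → WMon n)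
    (hexp : ∀ i, IsExp W (rdelta W δ r) (P i) (e i))
    (hstd : {v : WMon n | ∃ Q ∈ I, Q ≠ 0 ∧ IsExp W (rdelta W δ r) Q v} =
      {v : WMon n | ∃ i, ∃ γ : WMon n, v = e i + γ}) :
    Ideal.span {g : gr | ∃ Q ∈ I, Q ≠ 0 ∧ g = σ Q} =
      Ideal.span (Set.range fun i => σ (P i)) := by
  classical
  set J := Ideal.span (Set.range fun i => σ (P i)) with hJ
  have key : ∀ v : WMon n, ∀ Q, Q ∈ I → Q ≠ 0 → IsExp W (rdelta W δ r) Q v → σ Q ∈ J := by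
    intro v
    refine WellFounded.induction (C := fun v => ∀ Q, Q ∈ I → Q ≠ 0 → IsExp W (rdelta W δ r) Q v → σ Q ∈ J) hr.2.2.2.2 v ?_
    intro v IH Q hQI hQ0 hQe
    have hv : v ∈ {v : WMon n | ∃ i, ∃ γ : WMon n, v = e i + γ} := by
      rw [← hstd]; exact ⟨Q, hQI, hQ0, hQe⟩
    obtain ⟨i, γ, hveγ⟩ := hv
    have hvγ : γ + e i = v := by rw [add_comm]; exact hveγ.symm
    obtain ⟨S, hS, hSeq⟩ := SBaux3.mul_exp_decomp W hδ hr (hPne i) (hexp i) γ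
    rw [hvγ] at hS hSeq
    set c₀ := W.basis.repr (P i) (e i) with hc0
    have hc0ne : c₀ ≠ 0 := Finsupp.mem_support_iff.mp (hexp i).1
    set q := W.basis.repr Q v with hq
    have hqne : q ≠ 0 := Finsupp.mem_support_iff.mp hQe.1
    have hdivne : q / c₀ ≠ 0 := div_ne_zero hqne hc0ne
    set R := (q / c₀) • (wmono W.x W.D γ * P i) with hR
    have hMPI : wmono W.x W.D γ * P i ∈ I := I.mul_mem_left _ (hPI i)
    have hRI : R ∈ I := by
      rw [hR, Algebra.smul_def]
      exact I.mul_mem_left _ hMPI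
    have hRval : R = q • wmono W.x W.D v + (q / c₀) • S := by
      rw [hR, hSeq, smul_add, smul_smul, div_mul_cancel₀ q hc0ne]
    set Q' := Q - R with hQ'def
    have hQ'I : Q' ∈ I := I.sub_mem hQI hRI
    have hQQ' : Q = R + Q' := by rw [hQ'def]; abel
    set U := {u : WMon n | rdelta W δ r u v} with hUdef
    have himg : wmono W.x W.D '' U = ⇑W.basis '' U :=
      Set.image_congr fun ab _ => (W.basis_eq ab).symm
    have hQ'mem : Q' ∈ Submodule.span K (⇑W.basis '' U) := by
      have h1 : Q - q • wmono W.x W.D v ∈ Submodule.span K (⇑W.basis '' U) := by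
        rw [W.basis.mem_span_image]
        intro f hf
        simp only [Finset.mem_coe, Finsupp.mem_support_iff] at hf
        rw [← W.basis_eq, map_sub, map_smul, W.basis.repr_self, Finsupp.sub_apply,
          Finsupp.smul_apply, Finsupp.single_apply] at hf
        by_cases hfv : f = v
        · subst hfv
          rw [if_pos rfl, smul_eq_mul, mul_one, ← hq, sub_self] at hf
          exact absurd rfl hf
        · rw [if_neg (Ne.symm hfv), smul_zero, sub_zero] at hf
          exact hQe.2 f (Finsupp.mem_support_iff.mpr hf) hfv
      have h2 : (q / c₀) • S ∈ Submodule.span K (⇑W.basis '' U) := by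
        rw [← himg]; exact Submodule.smul_mem _ _ hS
      have hQ'eq : Q' = (Q - q • wmono W.x W.D v) - (q / c₀) • S := by
        rw [hQ'def, hRval]; abel
      rw [hQ'eq]
      exact Submodule.sub_mem _ h1 h2
    have hσR : σ R ∈ J := by
      rw [hR, hsmul, hmul]
      have h1 : σ (P i) ∈ J := Ideal.subset_span ⟨i, rfl⟩
      have h2 : σ (wmono W.x W.D γ) * σ (P i) ∈ J := Ideal.mul_mem_left _ _ h1
      rw [Algebra.smul_def]
      exact Ideal.mul_mem_left _ _ h2
    have hδQ : δ Q = δ (wmono W.x W.D v) := SBaux3.IsExp_delta W hδ hQ0 hQe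
    by_cases hQ'0 : Q' = 0
    · rw [hQQ', hQ'0, add_zero]; exact hσR
    · obtain ⟨e', he'⟩ := SBaux3.exp_exists W hr hQ'0
      have he'U : e' ∈ U := by
        have hsub := W.basis.mem_span_image.mp hQ'mem
        exact hsub he'.1
      have hδQ' : δ Q' = δ (wmono W.x W.D e') := SBaux3.IsExp_delta W hδ hQ'0 he'
      have hδR : δ R = δ Q := by
        rw [hR, Algebra.smul_def, hδ.1.mul, hδ.1.mul, hδ.1.scalar _ hdivne, zero_add,
          SBaux3.IsExp_delta W hδ (hPne i) (hexp i), ← SBaux3.δ_mono_add W hδ, hvγ]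
        exact hδQ.symm
      change rdelta W δ r e' v at he'U
      rcases he'U with hlt | ⟨heq, hre⟩
      · have hltδ : δ Q' < δ R := by rw [hδQ', hδR, hδQ]; exact hlt
        rw [hQQ', htop R Q' hltδ]
        exact hσR
      · have hδeq : δ R = δ Q' := by rw [hδQ', hδR, hδQ, heq]
        have hδsum : δ (R + Q') = δ R := by rw [← hQQ']; exact hδR.symm
        rw [hQQ', hadd R Q' hδeq hδsum]
        exact J.add_mem hσR (IH e' hre Q' hQ'I hQ'0 he')
  apply le_antisymm
  · apply Ideal.span_le.mpr
    rintro g ⟨Q, hQI, hQ0, rfl⟩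
    obtain ⟨v, hv⟩ := SBaux3.exp_exists W hr hQ0
    exact key v Q hQI hQ0 hv
  · apply Ideal.span_le.mpr
    rintro g ⟨i, rfl⟩
    exact Ideal.subset_span ⟨P i, hPI i, hPne i, rfl⟩
end

section
/- Let δ be the admissible order function on A_n(K) given by δ(x^α D^β) = β_n − α_n (the V-filtration order with respect to x_n = 0). The single operator P = 1 + x_n² D_n has principal symbol σ_δ(P) = 1, hence {P} is a δ-standard basis of the ideal I = A_n(K), but P does not generate A_n(K) as a left ideal (P is not a unit). Hence a δ-standard basis of an ideal need not be a generating system of the ideal. -/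
section Helpers
variable {K : Type*} [Field K] {n : ℕ} {A : Type*} [Ring A] [Algebra K A]

/-- weight of a monomial -/
def wt {n : ℕ} (ab : WMon (n+1)) : ℤ := (ab.2 (Fin.last n) : ℤ) - (ab.1 (Fin.last n) : ℤ)

lemma wmono_split (x D : Fin (n+1) → A) (ab : WMon (n+1)) :
    wmono x D ab =
      ((List.ofFn fun i : Fin n => x i.castSucc ^ ab.1 i.castSucc).prod
          * x (Fin.last n) ^ ab.1 (Fin.last n)) *
      ((List.ofFn fun i : Fin n => D i.castSucc ^ ab.2 i.castSucc).prod
          * D (Fin.last n) ^ ab.2 (Fin.last n)) := by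
  unfold wmono
  rw [List.ofFn_succ' (fun i => x i ^ ab.1 i), List.ofFn_succ' (fun i => D i ^ ab.2 i),
    List.prod_concat, List.prod_concat]

lemma DL_pow_xL (W : WeylData K (n+1) A) (k : ℕ) :
    W.D (Fin.last n) ^ k * W.x (Fin.last n) =
      W.x (Fin.last n) * W.D (Fin.last n) ^ k + k • W.D (Fin.last n) ^ (k-1) := by
  induction k with
  | zero => simp
  | succ k ih =>
    have hDx := W.hDx (Fin.last n) (Fin.last n)
    rw [if_pos rfl] at hDx
    rw [pow_succ, mul_assoc, hDx, mul_add, mul_one, ← mul_assoc, ih, add_mul, smul_mul_assoc]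
    cases k with
    | zero => simp [mul_assoc, pow_succ]
    | succ m =>
      have h1 : (m + 1).succ - 1 = m + 1 := rfl
      have h2 : m + 1 - 1 = m := rfl
      rw [h1, h2, ← pow_succ, ← mul_assoc]
      module

lemma commute_xL_Dlist (W : WeylData K (n+1) A) (β : Fin (n+1) → ℕ) :
    Commute (W.x (Fin.last n))
      ((List.ofFn fun i : Fin n => W.D i.castSucc ^ β i.castSucc).prod) := by
  apply Commute.list_prod_right
  intro a ha
  rw [List.mem_ofFn] at ha
  obtain ⟨i, rfl⟩ := ha
  apply Commute.pow_right
  have h := W.hDx i.castSucc (Fin.last n)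
  rw [if_neg (Fin.ne_last_of_lt (Fin.castSucc_lt_last i)), add_zero] at h
  exact (Commute.eq h).symm


def eL (n : ℕ) : Fin (n+1) → ℕ := Pi.single (Fin.last n) 1

lemma castSucc_ne_last' (i : Fin n) : (i.castSucc : Fin (n+1)) ≠ Fin.last n :=
  Fin.ne_last_of_lt (Fin.castSucc_lt_last i)

lemma eL_castSucc (i : Fin n) : eL n i.castSucc = 0 :=
  Pi.single_eq_of_ne (castSucc_ne_last' i) 1

lemma eL_last : eL n (Fin.last n) = 1 := Pi.single_eq_same _ _

lemma key_calc {Xc xp Dc dp : A} (a b : ℕ) (hc : Dc * xp = xp * Dc)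
    (hbx : dp ^ b * xp = xp * dp ^ b + b • dp ^ (b-1)) :
    (Xc * xp^a) * (Dc * dp^b) * xp
      = (Xc * xp^(a+1)) * (Dc * dp^b) + b • ((Xc * xp^a) * (Dc * dp^(b-1))) := by
  have step1 : (Xc * xp^a) * (Dc * dp^b) * xp
      = (Xc * xp^a) * (Dc * (xp * dp^b)) + b • ((Xc * xp^a) * (Dc * dp^(b-1))) := by
    rw [mul_assoc (Xc * xp^a), mul_assoc Dc, hbx, mul_add, mul_add, mul_smul_comm, mul_smul_comm]
  rw [step1]
  congr 1
  calc (Xc * xp ^ a) * (Dc * (xp * dp ^ b))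
      = (Xc * xp ^ a) * ((Dc * xp) * dp ^ b) := by rw [← mul_assoc Dc]
    _ = (Xc * xp ^ a) * ((xp * Dc) * dp ^ b) := by rw [hc]
    _ = (Xc * (xp^a * xp)) * (Dc * dp^b) := by noncomm_ring
    _ = (Xc * xp^(a+1)) * (Dc * dp^b) := by rw [pow_succ]

lemma mul_DL (W : WeylData K (n+1) A) (ab : WMon (n+1)) :
    wmono W.x W.D ab * W.D (Fin.last n) =
      wmono W.x W.D (ab.1, ab.2 + eL n) := by
  rw [wmono_split, wmono_split]
  have h1 : ∀ i : Fin n, (ab.2 + eL n) i.castSucc = ab.2 i.castSucc := by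
    intro i; simp [eL_castSucc]
  have h2 : (ab.2 + eL n) (Fin.last n) = ab.2 (Fin.last n) + 1 := by
    simp [eL_last]
  simp only [h1, h2]
  rw [pow_succ]
  noncomm_ring

lemma mul_xL (W : WeylData K (n+1) A) (ab : WMon (n+1)) :
    wmono W.x W.D ab * W.x (Fin.last n) =
      wmono W.x W.D (ab.1 + eL n, ab.2)
        + (ab.2 (Fin.last n)) • wmono W.x W.D (ab.1, ab.2 - eL n) := by
  rw [wmono_split, wmono_split, wmono_split]
  have h1 : ∀ i : Fin n, (ab.1 + eL n) i.castSucc = ab.1 i.castSucc := by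
    intro i; simp [eL_castSucc]
  have h2 : (ab.1 + eL n) (Fin.last n) = ab.1 (Fin.last n) + 1 := by
    simp [eL_last]
  have h3 : ∀ i : Fin n, (ab.2 - eL n) i.castSucc = ab.2 i.castSucc := by
    intro i; simp [eL_castSucc]
  have h4 : (ab.2 - eL n) (Fin.last n) = ab.2 (Fin.last n) - 1 := by
    simp [eL_last]
  simp only [h1, h2, h3, h4]
  exact key_calc _ _ ((commute_xL_Dlist W ab.2).symm.eq) (DL_pow_xL W _)

lemma repr_mul_xL (W : WeylData K (n+1) A) (X : A) :
    W.basis.repr (X * W.x (Fin.last n)) =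
      (W.basis.repr X).sum (fun ab k =>
        Finsupp.single (ab.1 + eL n, ab.2) k
          + Finsupp.single (ab.1, ab.2 - eL n) (k * (ab.2 (Fin.last n) : K))) := by
  conv_lhs => rw [← W.basis.linearCombination_repr X]
  rw [Finsupp.linearCombination_apply, Finsupp.sum_mul, map_finsuppSum]
  refine Finsupp.sum_congr ?_
  intro ab _
  rw [smul_mul_assoc, W.basis_eq, mul_xL, ← W.basis_eq (ab.1 + eL n, ab.2),
    ← W.basis_eq (ab.1, ab.2 - eL n)]
  rw [map_smul, map_add, map_nsmul, W.basis.repr_self, W.basis.repr_self]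
  ext v
  simp only [Finsupp.coe_add, Finsupp.coe_smul, Pi.add_apply, Pi.smul_apply,
    Finsupp.single_apply, smul_eq_mul]
  split_ifs <;> simp [mul_comm] <;> ring

lemma repr_mul_DL (W : WeylData K (n+1) A) (X : A) :
    W.basis.repr (X * W.D (Fin.last n)) =
      (W.basis.repr X).sum (fun ab k => Finsupp.single (ab.1, ab.2 + eL n) k) := by
  conv_lhs => rw [← W.basis.linearCombination_repr X]
  rw [Finsupp.linearCombination_apply, Finsupp.sum_mul, map_finsuppSum]
  refine Finsupp.sum_congr ?_
  intro ab _
  rw [smul_mul_assoc, W.basis_eq, mul_DL, ← W.basis_eq (ab.1, ab.2 + eL n),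
    map_smul, W.basis.repr_self]
  ext v
  simp [Finsupp.single_apply]

lemma supp_mul_xL (W : WeylData K (n+1) A) (X : A) (v : WMon (n+1))
    (hv : v ∈ (W.basis.repr (X * W.x (Fin.last n))).support) :
    ∃ ab ∈ (W.basis.repr X).support, wt v = wt ab - 1 := by
  rw [repr_mul_xL] at hv
  have h := Finsupp.support_sum hv
  rw [Finset.mem_biUnion] at h
  obtain ⟨ab, hab, hv2⟩ := h
  refine ⟨ab, hab, ?_⟩
  have h2 := Finsupp.support_add hv2
  rw [Finset.mem_union] at h2
  rcases h2 with h2 | h2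
  · have := Finsupp.support_single_subset h2
    rw [Finset.mem_singleton] at this
    subst this
    unfold wt
    simp only [Pi.add_apply, eL_last]
    push_cast
    ring
  · rw [Finsupp.mem_support_iff, Finsupp.single_apply] at h2
    split_ifs at h2 with hc
    · subst hc
      have hβ : ab.2 (Fin.last n) ≠ 0 := by
        intro h0
        rw [h0] at h2
        simp at h2
      unfold wt
      simp only [Pi.sub_apply, eL_last]
      omega
    · simp at h2

lemma supp_mul_DL (W : WeylData K (n+1) A) (X : A) (v : WMon (n+1))
    (hv : v ∈ (W.basis.repr (X * W.D (Fin.last n))).support) :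
    ∃ ab ∈ (W.basis.repr X).support, wt v = wt ab + 1 := by
  rw [repr_mul_DL] at hv
  have h := Finsupp.support_sum hv
  rw [Finset.mem_biUnion] at h
  obtain ⟨ab, hab, hv2⟩ := h
  refine ⟨ab, hab, ?_⟩
  have := Finsupp.support_single_subset hv2
  rw [Finset.mem_singleton] at this
  subst this
  unfold wt
  simp only [Pi.add_apply, eL_last]
  push_cast
  ring

lemma mul_DL_ne (W : WeylData K (n+1) A) (X : A) (hX : X ≠ 0) :
    X * W.D (Fin.last n) ≠ 0 := by
  have hc : W.basis.repr X ≠ 0 := by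
    rw [Ne, LinearEquiv.map_eq_zero_iff]; exact hX
  obtain ⟨ab, hab⟩ := Finsupp.support_nonempty_iff.2 hc
  intro h0
  have : W.basis.repr (X * W.D (Fin.last n)) (ab.1, ab.2 + eL n) = W.basis.repr X ab := by
    rw [repr_mul_DL, Finsupp.sum_apply, Finsupp.sum]
    rw [Finset.sum_eq_single ab]
    · rw [Finsupp.single_apply, if_pos rfl]
    · intro b hb hne
      rw [Finsupp.single_apply, if_neg]
      intro he
      simp only [Prod.mk.injEq] at he
      exact hne (Prod.ext he.1 (add_right_cancel he.2))
    · intro hab'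
      exact absurd hab hab'
  rw [h0, map_zero, Finsupp.coe_zero, Pi.zero_apply] at this
  exact (Finsupp.mem_support_iff.1 hab) this.symm

lemma mul_xL_ne (W : WeylData K (n+1) A) (X : A) (hX : X ≠ 0) :
    X * W.x (Fin.last n) ≠ 0 := by
  have hc : W.basis.repr X ≠ 0 := by
    rw [Ne, LinearEquiv.map_eq_zero_iff]; exact hX
  have hne : (W.basis.repr X).support.Nonempty := Finsupp.support_nonempty_iff.2 hc
  obtain ⟨ab0, hab0, hb⟩ := Finset.exists_mem_eq_sup' hne (fun ab => ab.2 (Fin.last n))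
  intro h0
  have : W.basis.repr (X * W.x (Fin.last n)) (ab0.1 + eL n, ab0.2) = W.basis.repr X ab0 := by
    rw [repr_mul_xL, Finsupp.sum_apply, Finsupp.sum]
    rw [Finset.sum_eq_single ab0]
    · rw [Finsupp.add_apply, Finsupp.single_apply, if_pos rfl, Finsupp.single_apply, if_neg,
        add_zero]
      intro he
      simp only [Prod.mk.injEq] at he
      have := congrFun he.1 (Fin.last n)
      simp [eL_last] at this
    · intro b hbs hne2
      have hfst : ¬ ((b.1 + eL n, b.2) = ((ab0.1 + eL n, ab0.2) : WMon (n+1))) := by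
        intro he
        simp only [Prod.mk.injEq] at he
        exact hne2 (Prod.ext (add_right_cancel he.1) he.2)
      rw [Finsupp.add_apply, Finsupp.single_apply, Finsupp.single_apply, if_neg hfst, zero_add]
      split_ifs with hsnd
      · by_cases hz : b.2 (Fin.last n) = 0
        · rw [hz]; simp
        · exfalso
          simp only [Prod.mk.injEq] at hsnd
          have h2 := congrFun hsnd.2 (Fin.last n)
          simp only [Pi.sub_apply, eL_last] at h2
          have hle : b.2 (Fin.last n) ≤ ab0.2 (Fin.last n) := by
            rw [← hb]
            exact Finset.le_sup' (fun ab => ab.2 (Fin.last n)) hbs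
          omega
      · rfl
    · intro hab'
      exact absurd hab0 hab'
  rw [h0, map_zero, Finsupp.coe_zero, Pi.zero_apply] at this
  exact (Finsupp.mem_support_iff.1 hab0) this.symm

lemma wmono_zero {m : ℕ} (x D : Fin m → A) : wmono x D (0 : WMon m) = 1 := by
  simp [wmono]

lemma wt_zero : wt (0 : WMon (n+1)) = 0 := by simp [wt]

lemma no_left_inv (W : WeylData K (n+1) A) (Q : A) :
    Q * (1 + W.x (Fin.last n) ^ 2 * W.D (Fin.last n)) ≠ 1 := by
  intro h
  have hnt : Nontrivial A := ⟨W.basis 0, 0, W.basis.ne_zero 0⟩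
  set R := W.x (Fin.last n) ^ 2 * W.D (Fin.last n) with hR
  have hQ0 : Q ≠ 0 := by rintro rfl; rw [zero_mul] at h; exact zero_ne_one h
  have hassoc : ∀ X : A, X * R = ((X * W.x (Fin.last n)) * W.x (Fin.last n)) * W.D (Fin.last n) := by
    intro X; rw [hR, sq]; noncomm_ring
  have hsupR : ∀ (X : A) (v : WMon (n+1)), v ∈ (W.basis.repr (X * R)).support →
      ∃ ab ∈ (W.basis.repr X).support, wt v = wt ab - 1 := by
    intro X v hv
    rw [hassoc] at hv
    obtain ⟨a1, ha1, he1⟩ := supp_mul_DL W _ v hv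
    obtain ⟨a2, ha2, he2⟩ := supp_mul_xL W _ a1 ha1
    obtain ⟨a3, ha3, he3⟩ := supp_mul_xL W _ a2 ha2
    exact ⟨a3, ha3, by omega⟩
  have hRne : ∀ X : A, X ≠ 0 → X * R ≠ 0 := by
    intro X hX
    rw [hassoc]
    exact mul_DL_ne W _ (mul_xL_ne W _ (mul_xL_ne W _ hX))
  have heq : Q + Q * R = 1 := by rw [← h, mul_add, mul_one]
  have hrepr1 : W.basis.repr (1 : A) = Finsupp.single (0 : WMon (n+1)) 1 := by
    have h1A : (1 : A) = W.basis 0 := by rw [W.basis_eq, wmono_zero]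
    rw [h1A, W.basis.repr_self]
  set c := W.basis.repr Q with hc
  have creq : ∀ v, c v + W.basis.repr (Q * R) v = Finsupp.single (0 : WMon (n+1)) 1 v := by
    intro v
    rw [← Finsupp.add_apply, ← map_add, heq, hrepr1]
  have hcne : c ≠ 0 := by rw [hc, Ne, LinearEquiv.map_eq_zero_iff]; exact hQ0
  have hsne : c.support.Nonempty := Finsupp.support_nonempty_iff.2 hcne
  -- maximum weight is 0
  obtain ⟨ab0, hab0, hM⟩ := Finset.exists_mem_eq_sup' hsne wt
  have hMmax : ∀ ab ∈ c.support, wt ab ≤ wt ab0 := fun ab hab => hM ▸ Finset.le_sup' wt hab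
  have hd0 : W.basis.repr (Q * R) ab0 = 0 := by
    by_contra hd
    obtain ⟨ab, habs, he⟩ := hsupR Q ab0 (Finsupp.mem_support_iff.2 hd)
    have := hMmax ab habs
    omega
  have hc0 : c ab0 ≠ 0 := Finsupp.mem_support_iff.1 hab0
  have hab0w : wt ab0 = 0 := by
    have h1 := creq ab0
    rw [hd0, add_zero, Finsupp.single_apply] at h1
    by_cases h00 : (0 : WMon (n+1)) = ab0
    · rw [← h00]; exact wt_zero
    · rw [if_neg h00] at h1; exact absurd h1 hc0
  -- minimum weight
  obtain ⟨ab1, hab1, hl⟩ := Finset.exists_mem_eq_inf' hsne wt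
  have hlmin : ∀ ab ∈ c.support, wt ab1 ≤ wt ab := fun ab hab => hl ▸ Finset.inf'_le wt hab
  have hl0 : wt ab1 ≤ 0 := hab0w ▸ hlmin ab0 hab0
  set cl := c.filter (fun ab => wt ab = wt ab1) with hcl
  set Y := W.basis.repr.symm cl with hYdef
  have hYr : W.basis.repr Y = cl := W.basis.repr.apply_symm_apply cl
  have hY0 : Y ≠ 0 := by
    intro h0
    rw [h0, map_zero] at hYr
    have h1 : cl ab1 = c ab1 := by rw [hcl, Finsupp.filter_apply, if_pos rfl]
    rw [← hYr] at h1
    exact Finsupp.mem_support_iff.1 hab1 h1.symm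
  set Z := Q - Y with hZdef
  have hZr : W.basis.repr Z = c - cl := by rw [hZdef, map_sub, hYr, hc]
  have hZsupp : ∀ ab ∈ (W.basis.repr Z).support, wt ab1 + 1 ≤ wt ab := by
    intro ab hab
    rw [hZr, Finsupp.mem_support_iff, Finsupp.sub_apply] at hab
    by_cases hw : wt ab = wt ab1
    · rw [hcl, Finsupp.filter_apply, if_pos hw, sub_self] at hab
      exact absurd rfl hab
    · have habc : ab ∈ c.support := by
        rw [hcl, Finsupp.filter_apply, if_neg hw, sub_zero] at hab
        exact Finsupp.mem_support_iff.2 hab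
      have := hlmin ab habc
      omega
  have hYR : Y * R ≠ 0 := hRne Y hY0
  have hYRsupp : (W.basis.repr (Y * R)).support.Nonempty :=
    Finsupp.support_nonempty_iff.2 (by rw [Ne, LinearEquiv.map_eq_zero_iff]; exact hYR)
  obtain ⟨v0, hv0⟩ := hYRsupp
  have hv0w : wt v0 = wt ab1 - 1 := by
    obtain ⟨ab, habY, he⟩ := hsupR Y v0 hv0
    rw [hYr, hcl, Finsupp.support_filter, Finset.mem_filter] at habY
    rw [he, habY.2]
  have hQsplit : Q * R = Y * R + Z * R := by
    rw [← add_mul, hZdef]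
    congr 1
    abel
  have h1 := creq v0
  have hcv0 : c v0 = 0 := by
    rw [← Finsupp.notMem_support_iff]
    intro hmem
    have := hlmin v0 hmem
    omega
  have hZRv0 : W.basis.repr (Z * R) v0 = 0 := by
    by_contra hzz
    obtain ⟨ab, habZ, he⟩ := hsupR Z v0 (Finsupp.mem_support_iff.2 hzz)
    have := hZsupp ab habZ
    omega
  have hsingle : Finsupp.single (0 : WMon (n+1)) 1 v0 = (0 : K) := by
    rw [Finsupp.single_apply, if_neg]
    intro h00
    have : wt v0 = 0 := by rw [← h00]; exact wt_zero
    omega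
  rw [hQsplit, map_add, Finsupp.add_apply, hcv0, hZRv0, hsingle, zero_add, add_zero] at h1
  exact Finsupp.mem_support_iff.1 hv0 h1

end Helpers

section MoreHelpers
variable {K : Type*} [Field K] {n : ℕ} {A : Type*} [Ring A] [Algebra K A]

lemma wmono_ee (W : WeylData K (n+1) A) :
    wmono W.x W.D ((Pi.single (Fin.last n) 2 : Fin (n+1) → ℕ), eL n)
      = W.x (Fin.last n) ^ 2 * W.D (Fin.last n) := by
  rw [wmono_split]
  have hx1 : ∀ i : Fin n, (Pi.single (Fin.last n) 2 : Fin (n+1) → ℕ) i.castSucc = 0 :=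
    fun i => Pi.single_eq_of_ne (castSucc_ne_last' i) 2
  have hx2 : (Pi.single (Fin.last n) 2 : Fin (n+1) → ℕ) (Fin.last n) = 2 := Pi.single_eq_same _ _
  simp [hx1, hx2, eL_castSucc, eL_last]

lemma ND_wmono (W : WeylData K (n+1) A) (ab : WMon (n+1)) :
    ND W (wmono W.x W.D ab) = {ab} := by
  unfold ND
  rw [← W.basis_eq, W.basis.repr_self, Finsupp.support_single_ne_zero _ one_ne_zero]

lemma basis_isExp (W : WeylData K (n+1) A)
    (δ : A → WithBot ℤ) (r : WMon (n+1) → WMon (n+1) → Prop) (v : WMon (n+1)) :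
    IsExp W (rdelta W δ r) (W.basis v) v := by
  constructor
  · unfold ND
    rw [W.basis.repr_self, Finsupp.support_single_ne_zero _ one_ne_zero]
    exact Finset.mem_singleton_self v
  · intro f hf hfe
    exfalso
    apply hfe
    unfold ND at hf
    rw [W.basis.repr_self, Finsupp.support_single_ne_zero _ one_ne_zero] at hf
    exact Finset.mem_singleton.1 hf

end MoreHelpers

/-- for the `V`-filtration order `δ(x^α D^β) = β_n - α_n` w.r.t. `x_n = 0`,
the operator `P = 1 + x_n² D_n` has `exp_δ(P) = 0` with leading coefficient `1` (i.e.
`σ_δ(P) = 1`), so `{P}` is a `δ`-standard basis of the ideal `I = A_n(K)` (whose set of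
`δ`-exponents is all of `0 + ℕ^{2n}`), yet `P` does not generate `A_n(K)` as a left
ideal (`P` is not a unit). -/
theorem standard_basis_not_generating (K : Type*) [Field K] (n : ℕ) (A : Type*) [Ring A]
    [Algebra K A] (W : WeylData K (n + 1) A)
    (r : WMon (n + 1) → WMon (n + 1) → Prop) (hr : WellMonomialOrdering r)
    (δ : A → WithBot ℤ)
    (hδ : ∀ P : A, δ P = (ND W P).sup fun ab =>
      (((ab.2 (Fin.last n) : ℤ) - (ab.1 (Fin.last n) : ℤ) : ℤ) : WithBot ℤ)) :
    IsExp W (rdelta W δ r) (1 + W.x (Fin.last n) ^ 2 * W.D (Fin.last n)) 0 ∧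
    W.basis.repr (1 + W.x (Fin.last n) ^ 2 * W.D (Fin.last n)) 0 = 1 ∧
    {v : WMon (n + 1) | ∃ Q : A, Q ≠ 0 ∧ IsExp W (rdelta W δ r) Q v} =
      {v : WMon (n + 1) | ∃ γ : WMon (n + 1), v = 0 + γ} ∧
    Ideal.span {1 + W.x (Fin.last n) ^ 2 * W.D (Fin.last n)} ≠ (⊤ : Ideal A) ∧
    ¬ IsUnit (1 + W.x (Fin.last n) ^ 2 * W.D (Fin.last n)) := by
  classical
  set ee : WMon (n+1) := ((Pi.single (Fin.last n) 2 : Fin (n+1) → ℕ), eL n) with hee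
  set P : A := 1 + W.x (Fin.last n) ^ 2 * W.D (Fin.last n) with hPdef
  have hee0 : ee ≠ (0 : WMon (n+1)) := by
    intro h0
    have h1 : (Pi.single (Fin.last n) 2 : Fin (n+1) → ℕ) = 0 := congrArg Prod.fst h0
    have := congrFun h1 (Fin.last n)
    simp at this
  have hP : P = W.basis 0 + W.basis ee := by
    rw [hPdef, W.basis_eq, W.basis_eq, wmono_zero, hee, wmono_ee]
  have hreprP : W.basis.repr P = Finsupp.single (0 : WMon (n+1)) 1 + Finsupp.single ee 1 := by
    rw [hP, map_add, W.basis.repr_self, W.basis.repr_self]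
  have hreprP0 : W.basis.repr P 0 = 1 := by
    rw [hreprP, Finsupp.add_apply, Finsupp.single_apply, Finsupp.single_apply,
      if_pos rfl, if_neg hee0, add_zero]
  have hNDP : ND W P = {(0 : WMon (n+1)), ee} := by
    unfold ND
    rw [hreprP]
    ext v
    rw [Finsupp.mem_support_iff, Finsupp.add_apply, Finsupp.single_apply, Finsupp.single_apply,
      Finset.mem_insert, Finset.mem_singleton]
    by_cases h1 : (0 : WMon (n+1)) = v
    · rw [if_pos h1, if_neg (h1 ▸ hee0)]
      simp [h1.symm]
    · by_cases h2 : ee = v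
      · rw [if_neg h1, if_pos h2]
        simp [h2.symm]
      · rw [if_neg h1, if_neg h2]
        simp [Ne.symm h1, Ne.symm h2]
  have hδmono : ∀ ab : WMon (n+1), δ (wmono W.x W.D ab)
      = (((ab.2 (Fin.last n) : ℤ) - (ab.1 (Fin.last n) : ℤ) : ℤ) : WithBot ℤ) := by
    intro ab
    rw [hδ, ND_wmono, Finset.sup_singleton]
  have hlt : rdelta W δ r ee 0 := by
    left
    rw [hδmono, hδmono]
    have h1 : (ee.2 (Fin.last n) : ℤ) - (ee.1 (Fin.last n) : ℤ) = -1 := by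
      rw [hee]
      simp [eL_last]
    have h2 : (((0 : WMon (n+1)).2 (Fin.last n) : ℤ) - ((0 : WMon (n+1)).1 (Fin.last n) : ℤ)) = 0 := by
      simp
    rw [h1, h2]
    exact_mod_cast (by norm_num : (-1 : ℤ) < 0)
  refine ⟨?_, hreprP0, ?_, ?_, ?_⟩
  · constructor
    · rw [hNDP]
      exact Finset.mem_insert_self _ _
    · intro f hf hfe
      rw [hNDP, Finset.mem_insert, Finset.mem_singleton] at hf
      rcases hf with hf | hf
      · exact absurd hf hfe
      · rw [hf]
        exact hlt
  · ext v
    simp only [Set.mem_setOf_eq]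
    constructor
    · intro _
      exact ⟨v, (zero_add v).symm⟩
    · intro _
      exact ⟨W.basis v, W.basis.ne_zero v, basis_isExp W δ r v⟩
  · intro hspan
    have h1 : (1 : A) ∈ Ideal.span ({P} : Set A) := by
      rw [hspan]; exact Submodule.mem_top
    obtain ⟨a, ha⟩ := Submodule.mem_span_singleton.1 h1
    rw [smul_eq_mul] at ha
    exact no_left_inv W a (hPdef ▸ ha)
  · intro hu
    obtain ⟨b, hb⟩ := hu.exists_left_inv
    exact no_left_inv W b hb
end
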